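/- arXiv:1204.2604 — 13 statements merged into one kernel-verified Lean document; each statement's English description precedes it below -/
import Mathlib

section
/- For every connected simple graph G on n vertices, the vertex-forwarding index satisfies n·ξ(G) ≥ Σ_{u∈V} Σ_{v∈V, v≠u} (d_G(u,v) − 1), where d_G(u,v) denotes the graph distance between u and v; that is, ξ(G) is at least the average A(G) = (1/n)·Σ_{u∈V} Σ_{v≠u} (d_G(u,v) − 1). -/
open Finset

namespace Forwarding

variable {V : Type*} [Fintype V] [DecidableEq V]

/-- A routing of a graph `G`: for every ordered pair of vertices, a fixed path.
(For `x = y` the path condition forces the trivial walk, so only the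
`n(n-1)` paths between distinct vertices matter.) -/
structure Routing (G : SimpleGraph V) where
  walk : ∀ x y : V, G.Walk x y
  isPath : ∀ x y : V, (walk x y).IsPath

/-- A routing is minimal if every specified path is a shortest path. -/
def Routing.IsMinimal {G : SimpleGraph V} (R : Routing G) : Prop :=
  ∀ x y : V, (R.walk x y).length = G.dist x y

/-- The load of a vertex `x`: the number of paths of the routing passing
through `x` as an internal vertex. -/
def vertexLoad {G : SimpleGraph V} (R : Routing G) (x : V) : ℕ :=
  (univ.filter fun p : V × V =>
    p.1 ≠ p.2 ∧ x ∈ (R.walk p.1 p.2).support ∧ x ≠ p.1 ∧ x ≠ p.2).card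

/-- The load of an edge `e`: the number of paths of the routing traversing `e`. -/
def edgeLoad {G : SimpleGraph V} (R : Routing G) (e : Sym2 V) : ℕ :=
  (univ.filter fun p : V × V => p.1 ≠ p.2 ∧ e ∈ (R.walk p.1 p.2).edges).card

/-- `ξ(G,R)`: the maximum vertex load of the routing `R`. -/
def routingVertexIndex {G : SimpleGraph V} (R : Routing G) : ℕ :=
  univ.sup (vertexLoad R)

/-- `π(G,R)`: the maximum edge load of the routing `R`. (Edges not in `G`
carry load `0`, so taking the `sup` over all of `Sym2 V` is equivalent.) -/
def routingEdgeIndex {G : SimpleGraph V} (R : Routing G) : ℕ :=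
  univ.sup (edgeLoad R)

/-- The vertex-forwarding index `ξ(G)`. -/
noncomputable def xi (G : SimpleGraph V) : ℕ :=
  sInf { k | ∃ R : Routing G, routingVertexIndex R = k }

/-- The vertex-forwarding index over minimal routings, `ξ_m(G)`. -/
noncomputable def xiMin (G : SimpleGraph V) : ℕ :=
  sInf { k | ∃ R : Routing G, R.IsMinimal ∧ routingVertexIndex R = k }

/-- The edge-forwarding index `π(G)`. -/
noncomputable def piIdx (G : SimpleGraph V) : ℕ :=
  sInf { k | ∃ R : Routing G, routingEdgeIndex R = k }

/-- The edge-forwarding index over minimal routings, `π_m(G)`. -/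
noncomputable def piMinIdx (G : SimpleGraph V) : ℕ :=
  sInf { k | ∃ R : Routing G, R.IsMinimal ∧ routingEdgeIndex R = k }

end Forwarding

/-- For every connected simple graph `G` on `n` vertices,
`n * ξ(G) ≥ Σ_{u} Σ_{v ≠ u} (d_G(u,v) - 1)`. -/
theorem vertex_forwarding_lower_bound {V : Type*} [Fintype V] [DecidableEq V]
    (G : SimpleGraph V) (hG : G.Connected) :
    ∑ u : V, ∑ v ∈ Finset.univ.erase u, (G.dist u v - 1) ≤
      Fintype.card V * Forwarding.xi G := by
  classical
  -- a routing exists since `G` is connected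
  have hne : { k | ∃ R : Forwarding.Routing G, Forwarding.routingVertexIndex R = k }.Nonempty := by
    refine ⟨_, ⟨⟨fun x y => ((hG x y).some.toPath : G.Path x y).1,
      fun x y => ((hG x y).some.toPath).2⟩, rfl⟩⟩
  obtain ⟨R, hR⟩ : ∃ R : Forwarding.Routing G,
      Forwarding.routingVertexIndex R = Forwarding.xi G := Nat.sInf_mem hne
  -- counting internal vertices of each path
  have hcount : ∀ u v : V, u ≠ v →
      (univ.filter fun x : V => x ∈ (R.walk u v).support ∧ x ≠ u ∧ x ≠ v).card
        = (R.walk u v).length - 1 := by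
    intro u v huv
    set w := R.walk u v with hw
    have hpath := R.isPath u v
    have hfil : (univ.filter fun x : V => x ∈ w.support ∧ x ≠ u ∧ x ≠ v)
        = w.support.toFinset \ {u, v} := by
      ext x
      simp only [mem_filter, mem_univ, true_and, mem_sdiff, List.mem_toFinset,
        mem_insert, mem_singleton, not_or]
    have hsub : ({u, v} : Finset V) ⊆ w.support.toFinset := by
      intro y hy
      simp only [mem_insert, mem_singleton] at hy
      rcases hy with rfl | rfl
      · exact List.mem_toFinset.2 w.start_mem_support
      · exact List.mem_toFinset.2 w.end_mem_support
    rw [hfil, card_sdiff_of_subset hsub, List.toFinset_card_of_nodup hpath.support_nodup,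
      SimpleGraph.Walk.length_support, card_insert_of_notMem (by simpa using huv),
      card_singleton]
    rw [hw]
    omega
  -- total load equals total number of internal vertices
  have hswap : ∑ x : V, Forwarding.vertexLoad R x
      = ∑ u : V, ∑ v ∈ Finset.univ.erase u, ((R.walk u v).length - 1) := by
    have : ∑ x : V, Forwarding.vertexLoad R x
        = ∑ p : V × V, (univ.filter fun x : V =>
            p.1 ≠ p.2 ∧ x ∈ (R.walk p.1 p.2).support ∧ x ≠ p.1 ∧ x ≠ p.2).card := by
      simp only [Forwarding.vertexLoad, card_filter]
      rw [Finset.sum_comm]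
    rw [this, Fintype.sum_prod_type]
    refine Finset.sum_congr rfl fun u _ => ?_
    rw [← Finset.sum_filter_add_sum_filter_not univ (fun v => u ≠ v)]
    have h1 : univ.filter (fun v => u ≠ v) = univ.erase u := by
      ext v; simp [eq_comm, ne_comm]
    have h2 : ∀ v ∈ univ.filter (fun v => ¬ u ≠ v),
        (univ.filter fun x : V =>
          u ≠ v ∧ x ∈ (R.walk u v).support ∧ x ≠ u ∧ x ≠ v).card = 0 := by
      intro v hv
      simp only [mem_filter, not_not] at hv
      simp [hv.2]
    rw [Finset.sum_eq_zero h2, add_zero, h1]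
    refine Finset.sum_congr rfl fun v hv => ?_
    have huv : u ≠ v := fun h => (Finset.mem_erase.1 hv).1 h.symm
    rw [← hcount u v huv]
    congr 1
    ext x
    simp [huv]
  calc ∑ u : V, ∑ v ∈ Finset.univ.erase u, (G.dist u v - 1)
      ≤ ∑ u : V, ∑ v ∈ Finset.univ.erase u, ((R.walk u v).length - 1) := by
        refine Finset.sum_le_sum fun u _ => Finset.sum_le_sum fun v _ => ?_
        exact Nat.sub_le_sub_right (SimpleGraph.dist_le _) 1
    _ = ∑ x : V, Forwarding.vertexLoad R x := hswap.symm
    _ ≤ ∑ _x : V, Forwarding.routingVertexIndex R :=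
        Finset.sum_le_sum fun x _ => Finset.le_sup (mem_univ x)
    _ = Fintype.card V * Forwarding.xi G := by
        rw [Finset.sum_const, card_univ, smul_eq_mul, hR]
end

section
/- For every connected simple graph G on n vertices, the vertex-forwarding index satisfies ξ(G) ≤ (n−1)(n−2). -/
open Finset

/-- For every connected simple graph `G` on `n` vertices,
`ξ(G) ≤ (n-1)(n-2)`. -/
theorem vertex_forwarding_upper_bound {V : Type*} [Fintype V] [DecidableEq V]
    (G : SimpleGraph V) (hG : G.Connected) :
    Forwarding.xi G ≤ (Fintype.card V - 1) * (Fintype.card V - 2) := by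
  classical
  let R : Forwarding.Routing G :=
    ⟨fun x y => ((hG x y).some.toPath : G.Path x y).1,
     fun x y => ((hG x y).some.toPath : G.Path x y).2⟩
  have hR : Forwarding.routingVertexIndex R ≤
      (Fintype.card V - 1) * (Fintype.card V - 2) := by
    apply Finset.sup_le
    intro x _
    have hsub : (Finset.univ.filter fun p : V × V =>
        p.1 ≠ p.2 ∧ x ∈ (R.walk p.1 p.2).support ∧ x ≠ p.1 ∧ x ≠ p.2) ⊆
        ({x}ᶜ : Finset V).offDiag := by
      intro p hp
      simp only [Finset.mem_filter] at hp
      simp only [Finset.mem_offDiag, Finset.mem_compl, Finset.mem_singleton]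
      exact ⟨fun h => hp.2.2.2.1 h.symm, fun h => hp.2.2.2.2 h.symm, hp.2.1⟩
    calc Forwarding.vertexLoad R x ≤ (({x}ᶜ : Finset V).offDiag).card :=
          Finset.card_le_card hsub
      _ = (Fintype.card V - 1) * (Fintype.card V - 2) := by
          rw [Finset.offDiag_card, Finset.card_compl, Finset.card_singleton]
          have h2 : Fintype.card V - 2 = (Fintype.card V - 1) - 1 := by omega
          rw [h2]
          exact (Nat.mul_pred (Fintype.card V - 1) (Fintype.card V - 1)).symm
  exact le_trans (Nat.sInf_le ⟨R, rfl⟩) hR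
end

section
/- For n ≥ 3, the star K_{1,n−1} satisfies ξ(K_{1,n−1}) = (n−1)(n−2), and it is the unique graph attaining the upper bound: if G is a connected simple graph on n ≥ 3 vertices with ξ(G) = (n−1)(n−2), then G is isomorphic to the star K_{1,n−1}. -/
open Finset

/-- The star `K_{1,n-1}` with center `c`. -/
def starGraph {V : Type*} (c : V) : SimpleGraph V where
  Adj x y := x ≠ y ∧ (x = c ∨ y = c)
  symm := ⟨fun x y h => ⟨h.1.symm, h.2.symm⟩⟩
  loopless := ⟨fun x h => h.1 rfl⟩

section Aux

open Forwarding SimpleGraph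

variable {V : Type*} [Fintype V] [DecidableEq V]

/-- A shortest-path routing of a connected graph. -/
noncomputable def minimalRouting {G : SimpleGraph V} (h : G.Connected) : Routing G where
  walk x y := ((h.exists_walk_length_eq_dist x y).choose).bypass
  isPath _ _ := Walk.bypass_isPath _

lemma minimalRouting_isMinimal {G : SimpleGraph V} (h : G.Connected) :
    (minimalRouting h).IsMinimal := fun x y =>
  le_antisymm
    (le_trans (Walk.length_bypass_le _)
      (le_of_eq (h.exists_walk_length_eq_dist x y).choose_spec))
    (SimpleGraph.dist_le _)

lemma card_offDiag_erase (x : V) :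
    ((univ.erase x).offDiag).card = (Fintype.card V - 1) * (Fintype.card V - 2) := by
  rw [Finset.offDiag_card, Finset.card_erase_of_mem (mem_univ x), Finset.card_univ]
  have h2 : Fintype.card V - 2 = Fintype.card V - 1 - 1 := by omega
  rw [h2]
  generalize Fintype.card V - 1 = m
  rw [Nat.mul_sub_one]

lemma filter_subset_offDiag {G : SimpleGraph V} (R : Routing G) (x : V) :
    (univ.filter fun p : V × V =>
      p.1 ≠ p.2 ∧ x ∈ (R.walk p.1 p.2).support ∧ x ≠ p.1 ∧ x ≠ p.2)
      ⊆ (univ.erase x).offDiag := by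
  intro p hp
  simp only [Finset.mem_filter, Finset.mem_univ, true_and] at hp
  simp only [Finset.mem_offDiag, Finset.mem_erase, Finset.mem_univ, and_true]
  exact ⟨hp.2.2.1.symm, hp.2.2.2.symm, hp.1⟩

lemma vertexLoad_le {G : SimpleGraph V} (R : Routing G) (x : V) :
    vertexLoad R x ≤ (Fintype.card V - 1) * (Fintype.card V - 2) :=
  (card_offDiag_erase x) ▸ Finset.card_le_card (filter_subset_offDiag R x)

lemma xi_le {G : SimpleGraph V} (h : G.Connected) :
    xi G ≤ (Fintype.card V - 1) * (Fintype.card V - 2) :=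
  le_trans (Nat.sInf_le ⟨minimalRouting h, rfl⟩)
    (Finset.sup_le fun x _ => vertexLoad_le _ x)

lemma star_center_mem_support {c x y : V} (hx : x ≠ c) (hxy : x ≠ y)
    (w : (_root_.starGraph c).Walk x y) : c ∈ w.support := by
  cases w with
  | nil => exact absurd rfl hxy
  | cons h p =>
    rcases h.2 with h1 | h2
    · exact absurd h1 hx
    · subst h2
      rw [Walk.support_cons]
      exact List.mem_cons_of_mem _ p.start_mem_support

lemma star_connected {c : V} [Nonempty V] : (_root_.starGraph c).Connected := by
  rw [SimpleGraph.connected_iff]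
  have key : ∀ u : V, (_root_.starGraph c).Reachable u c := by
    intro u
    by_cases hu : u = c
    · subst hu; rfl
    · exact SimpleGraph.Adj.reachable ⟨hu, Or.inr rfl⟩
  exact ⟨fun u v => (key u).trans (key v).symm, ⟨c⟩⟩

lemma star_load_ge {c : V} (R : Routing (_root_.starGraph c)) :
    (Fintype.card V - 1) * (Fintype.card V - 2) ≤ vertexLoad R c := by
  rw [← card_offDiag_erase c]
  apply Finset.card_le_card
  intro p hp
  simp only [Finset.mem_offDiag, Finset.mem_erase, Finset.mem_univ, and_true] at hp
  obtain ⟨h1, h2, h3⟩ := hp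
  simp only [Finset.mem_filter, Finset.mem_univ, true_and]
  exact ⟨h3, star_center_mem_support h1 h3 _, Ne.symm h1, Ne.symm h2⟩

lemma not_mem_support_of_length_one {G : SimpleGraph V} {u v x : V} (w : G.Walk u v)
    (hw : w.length = 1) (hu : x ≠ u) (hv : x ≠ v) : x ∉ w.support := by
  cases w with
  | nil => simp at hw
  | @cons _ b _ h p =>
    cases p with
    | nil => simp [SimpleGraph.Walk.support_cons, hu, hv]
    | cons h' p' => simp [SimpleGraph.Walk.length_cons] at hw

end Aux

open Forwarding

/-- For `n ≥ 3`, the star `K_{1,n-1}` satisfies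
`ξ(K_{1,n-1}) = (n-1)(n-2)`, and it is the unique connected graph on `n`
vertices attaining this upper bound. -/
theorem star_attains_upper_bound_and_unique {V : Type*} [Fintype V] [DecidableEq V]
    (hn : 3 ≤ Fintype.card V) :
    (∀ c : V, Forwarding.xi (starGraph c) =
        (Fintype.card V - 1) * (Fintype.card V - 2)) ∧
    (∀ G : SimpleGraph V, G.Connected →
      Forwarding.xi G = (Fintype.card V - 1) * (Fintype.card V - 2) →
      ∃ c : V, Nonempty (G ≃g starGraph c)) := by
  constructor
  · intro c
    have : Nonempty V := ⟨c⟩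
    refine le_antisymm (xi_le star_connected) ?_
    refine le_csInf ⟨_, minimalRouting star_connected, rfl⟩ ?_
    rintro k ⟨R, rfl⟩
    exact le_trans (star_load_ge R) (Finset.le_sup (Finset.mem_univ c))
  · intro G hG hxi
    have : Nonempty V := Fintype.card_pos_iff.mp (by omega)
    set R := minimalRouting hG with hR
    have hmin := minimalRouting_isMinimal hG
    have hge : (Fintype.card V - 1) * (Fintype.card V - 2) ≤ routingVertexIndex R :=
      hxi ▸ Nat.sInf_le ⟨R, rfl⟩
    obtain ⟨x, -, hx⟩ := Finset.exists_mem_eq_sup Finset.univ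
      Finset.univ_nonempty (vertexLoad R)
    rw [routingVertexIndex] at hge
    rw [hx] at hge
    -- the filter set equals the offDiag set
    have heq := Finset.eq_of_subset_of_card_le (filter_subset_offDiag R x)
      (le_trans (le_of_eq (card_offDiag_erase x)) hge)
    have hmem : ∀ u v : V, u ≠ x → v ≠ x → u ≠ v → x ∈ (R.walk u v).support := by
      intro u v hu hv huv
      have : (u, v) ∈ (Finset.univ.erase x).offDiag := by
        simp only [Finset.mem_offDiag, Finset.mem_erase, Finset.mem_univ, and_true]
        exact ⟨hu, hv, huv⟩
      rw [← heq, Finset.mem_filter] at this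
      exact this.2.2.1
    -- no two non-central vertices are adjacent
    have hnon : ∀ u v : V, u ≠ x → v ≠ x → ¬ G.Adj u v := by
      intro u v hu hv hadj
      have hlen : (R.walk u v).length = 1 := by
        rw [hmin u v, SimpleGraph.dist_eq_one_iff_adj]; exact hadj
      exact not_mem_support_of_length_one (R.walk u v) hlen (Ne.symm hu) (Ne.symm hv)
        (hmem u v hu hv hadj.ne)
    -- every vertex other than x is adjacent to x
    have hadjx : ∀ v : V, v ≠ x → G.Adj v x := by
      intro v hv
      obtain ⟨w⟩ := hG.preconnected v x
      clear hx heq hmem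
      cases w with
      | nil => exact absurd rfl hv
      | @cons _ b _ h p =>
        by_cases hb : b = x
        · subst hb; exact h
        · exact absurd h (hnon v b hv hb)
    refine ⟨x, ⟨⟨Equiv.refl V, ?_⟩⟩⟩
    intro a b
    show (a ≠ b ∧ (a = x ∨ b = x)) ↔ G.Adj a b
    constructor
    · rintro ⟨hab, h | h⟩
      · subst h; exact (hadjx b (Ne.symm hab)).symm
      · subst h; exact hadjx a hab
    · intro hab
      refine ⟨hab.ne, ?_⟩
      by_contra hcon
      push_neg at hcon
      exact hnon a b hcon.1 hcon.2 hab
end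

section
/- For every connected simple graph G on n vertices, the edge-forwarding index satisfies π(G) ≤ ⌊n²/2⌋. -/
open Finset

set_option linter.unusedSectionVars false

section ShortestAux

variable {V : Type*} [DecidableEq V] {G : SimpleGraph V}

lemma shortest_dart_dist (hG : G.Connected) :
    ∀ {x y : V} (p : G.Walk x y), p.length = G.dist x y →
      ∀ d ∈ p.darts, G.dist d.snd y + 1 = G.dist d.fst y := by
  intro x y p
  induction p with
  | nil => intro _ d hd; simp at hd
  | @cons x w y h q ih =>
    intro hp d hd
    simp only [SimpleGraph.Walk.length_cons] at hp
    have h1 : G.dist x w ≤ 1 := by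
      simpa using SimpleGraph.dist_le (SimpleGraph.Walk.cons h SimpleGraph.Walk.nil)
    have h2 : G.dist x y ≤ G.dist x w + G.dist w y := hG.dist_triangle
    have h3 : G.dist w y ≤ q.length := SimpleGraph.dist_le q
    have hq : q.length = G.dist w y := by omega
    rw [SimpleGraph.Walk.darts_cons, List.mem_cons] at hd
    rcases hd with rfl | hd
    · simpa using by omega
    · exact ih hq d hd

lemma shortest_support_dist (hG : G.Connected) {x y z : V} (p : G.Walk x y)
    (hp : p.length = G.dist x y) (hz : z ∈ p.support) :
    G.dist x z + G.dist z y = G.dist x y := by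
  have hlen : (p.takeUntil z hz).length + (p.dropUntil z hz).length = p.length := by
    conv_rhs => rw [← p.take_spec hz]
    rw [SimpleGraph.Walk.length_append]
  have h1 := SimpleGraph.dist_le (p.takeUntil z hz)
  have h2 := SimpleGraph.dist_le (p.dropUntil z hz)
  have h3 : G.dist x y ≤ G.dist x z + G.dist z y := hG.dist_triangle
  omega

end ShortestAux

/-- For every connected simple graph `G` on `n` vertices,
`π(G) ≤ ⌊n² / 2⌋`. -/
theorem edge_forwarding_upper_bound {V : Type*} [Fintype V] [DecidableEq V]
    (G : SimpleGraph V) (hG : G.Connected) :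
    Forwarding.piIdx G ≤ Fintype.card V ^ 2 / 2 := by
  classical
  have hw : ∀ x y : V, ∃ p : G.Walk x y, p.IsPath ∧ p.length = G.dist x y := by
    intro x y
    obtain ⟨p, hp⟩ := hG.exists_walk_length_eq_dist x y
    refine ⟨p.bypass, p.bypass_isPath, le_antisymm ?_ (SimpleGraph.dist_le _)⟩
    calc p.bypass.length ≤ p.length := p.length_bypass_le
    _ = _ := hp
  choose w hpath hlen using hw
  set R : Forwarding.Routing G := ⟨w, hpath⟩ with hR
  have key : Forwarding.routingEdgeIndex R ≤ Fintype.card V ^ 2 / 2 := by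
    apply Finset.sup_le
    intro e _
    induction e using Sym2.inductionOn with
    | hf u v =>
      set A := univ.filter (fun z : V => G.dist z u < G.dist z v) with hA
      set B := univ.filter (fun z : V => G.dist z v < G.dist z u) with hB
      have hsub : (univ.filter fun p : V × V =>
          p.1 ≠ p.2 ∧ s(u, v) ∈ (R.walk p.1 p.2).edges) ⊆ A ×ˢ B ∪ B ×ˢ A := by
        rintro ⟨x, y⟩ hxy
        simp only [mem_filter, mem_univ, true_and] at hxy
        obtain ⟨hne, he⟩ := hxy
        have he' : ∃ d ∈ (w x y).darts, d.edge = s(u, v) := by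
          simpa [SimpleGraph.Walk.edges, List.mem_map] using he
        obtain ⟨d, hd, hde⟩ := he'
        have hfst := shortest_support_dist hG (w x y) (hlen x y)
          (SimpleGraph.Walk.dart_fst_mem_support_of_mem_darts _ hd)
        have hsnd := shortest_support_dist hG (w x y) (hlen x y)
          (SimpleGraph.Walk.dart_snd_mem_support_of_mem_darts _ hd)
        have hdd := shortest_dart_dist hG (w x y) (hlen x y) d hd
        have : d.toProd = (u, v) ∨ d.toProd = (v, u) := by
          have : s(d.toProd.1, d.toProd.2) = s((u, v).1, (u, v).2) := hde
          rcases Sym2.mk_eq_mk_iff.1 this with h' | h'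
          · exact Or.inl h'
          · exact Or.inr h'
        simp only [mem_union, mem_product, hA, hB, mem_filter, mem_univ, true_and]
        rcases this with h' | h'
        · left
          have h1 : d.fst = u := by rw [h']
          have h2 : d.snd = v := by rw [h']
          simp only [h1, h2] at hfst hsnd hdd
          constructor
          · omega
          · rw [SimpleGraph.dist_comm (u := y) (v := v),
              SimpleGraph.dist_comm (u := y) (v := u)]
            omega
        · right
          have h1 : d.fst = v := by rw [h']
          have h2 : d.snd = u := by rw [h']
          simp only [h1, h2] at hfst hsnd hdd
          constructor
          · omega
          · rw [SimpleGraph.dist_comm (u := y) (v := u),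
              SimpleGraph.dist_comm (u := y) (v := v)]
            omega
      have hdisj : Disjoint A B := by
        rw [Finset.disjoint_left]
        intro z hzA hzB
        simp only [hA, hB, mem_filter] at hzA hzB
        omega
      have hcard : A.card + B.card ≤ Fintype.card V := by
        rw [← Finset.card_union_of_disjoint hdisj]
        exact (Finset.card_le_card (Finset.subset_univ _)).trans_eq (Finset.card_univ)
      calc Forwarding.edgeLoad R s(u, v)
          ≤ (A ×ˢ B ∪ B ×ˢ A).card := Finset.card_le_card hsub
        _ ≤ A.card * B.card + B.card * A.card := by
            refine (Finset.card_union_le _ _).trans ?_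
            simp [Finset.card_product]
        _ ≤ Fintype.card V ^ 2 / 2 := by
            rw [Nat.le_div_iff_mul_le (by norm_num)]
            zify at hcard ⊢
            nlinarith [sq_nonneg ((#A : ℤ) - #B), hcard]
  exact le_trans (Nat.sInf_le ⟨R, rfl⟩) key
end

section
/- For every connected simple graph G on n vertices with maximum degree Δ, one has 2·ξ(G) + 2(n−1) ≤ Δ·π(G). -/
open Finset

section Aux
variable {V : Type*} [DecidableEq V]

lemma first_edge_mem {G : SimpleGraph V} {x b : V} (w : G.Walk x b) (h : x ≠ b) :
    ∃ e ∈ w.edges, x ∈ e := by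
  cases w with
  | nil => exact absurd rfl h
  | @cons _ c _ h' q => refine ⟨s(x, c), ?_, ?_⟩ <;> simp

lemma two_edges_mem {G : SimpleGraph V} {a b x : V} (w : G.Walk a b) (hw : w.IsPath)
    (hx : x ∈ w.support) (ha : x ≠ a) (hb : x ≠ b) :
    ∃ e1 ∈ w.edges, ∃ e2 ∈ w.edges, e1 ≠ e2 ∧ x ∈ e1 ∧ x ∈ e2 := by
  have hsplit : w.edges = (w.takeUntil x hx).edges ++ (w.dropUntil x hx).edges := by
    conv_lhs => rw [← w.take_spec hx]
    exact SimpleGraph.Walk.edges_append _ _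
  obtain ⟨e1, he1, hxe1⟩ := first_edge_mem (w.takeUntil x hx).reverse ha
  rw [SimpleGraph.Walk.edges_reverse, List.mem_reverse] at he1
  obtain ⟨e2, he2, hxe2⟩ := first_edge_mem (w.dropUntil x hx) hb
  have hnd := hw.edges_nodup
  rw [hsplit] at hnd
  have hdisj := (List.nodup_append'.mp hnd).2.2
  refine ⟨e1, ?_, e2, ?_, fun hne => hdisj (hne ▸ he1) he2, hxe1, hxe2⟩
  · rw [hsplit]; exact List.mem_append_left _ he1
  · rw [hsplit]; exact List.mem_append_right _ he2

end Aux

/-- For every connected simple graph `G` on `n` vertices with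
maximum degree `Δ`, `2ξ(G) + 2(n-1) ≤ Δ·π(G)`. -/
theorem xi_pi_inequality_a {V : Type*} [Fintype V] [DecidableEq V]
    (G : SimpleGraph V) [DecidableRel G.Adj] (hG : G.Connected) :
    2 * Forwarding.xi G + 2 * (Fintype.card V - 1) ≤
      G.maxDegree * Forwarding.piIdx G := by
  classical
  have R0 : Forwarding.Routing G :=
    ⟨fun x y => ((hG.preconnected x y).some.toPath : G.Path x y).1,
     fun x y => ((hG.preconnected x y).some.toPath : G.Path x y).2⟩
  have hne : {k | ∃ R : Forwarding.Routing G, Forwarding.routingEdgeIndex R = k}.Nonempty :=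
    ⟨_, R0, rfl⟩
  obtain ⟨R, hR⟩ := Nat.sInf_mem hne
  have hR' : Forwarding.routingEdgeIndex R = Forwarding.piIdx G := hR
  have : Nonempty V := hG.nonempty
  obtain ⟨x, -, hx⟩ := Finset.exists_mem_eq_sup (univ : Finset V) univ_nonempty
    (Forwarding.vertexLoad R)
  set A := G.incidenceFinset x with hA
  set f : V × V → ℕ :=
    fun p => (A.filter fun e => p.1 ≠ p.2 ∧ e ∈ (R.walk p.1 p.2).edges).card with hf
  have key1 : ∑ e ∈ A, Forwarding.edgeLoad R e = ∑ p ∈ (univ : Finset (V × V)), f p := by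
    simp only [Forwarding.edgeLoad, hf, Finset.card_filter]
    exact Finset.sum_comm
  set T1 := (univ : Finset (V × V)).filter
    (fun p => p.1 ≠ p.2 ∧ x ∈ (R.walk p.1 p.2).support ∧ x ≠ p.1 ∧ x ≠ p.2) with hT1
  set T2 := (univ : Finset (V × V)).filter
    (fun p => (p.1 = x ∧ p.2 ≠ x) ∨ (p.2 = x ∧ p.1 ≠ x)) with hT2
  have hdisj : Disjoint T1 T2 := by
    rw [Finset.disjoint_left]
    intro p hp1 hp2
    simp only [hT1, hT2, Finset.mem_filter] at hp1 hp2
    rcases hp2.2 with ⟨h, -⟩ | ⟨h, -⟩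
    · exact hp1.2.2.2.1 h.symm
    · exact hp1.2.2.2.2 h.symm
  have hf1 : ∀ p ∈ T1, 2 ≤ f p := by
    intro p hp
    simp only [hT1, Finset.mem_filter] at hp
    obtain ⟨-, hpne, hsup, h1, h2⟩ := hp
    obtain ⟨e1, he1, e2, he2, hne12, hx1, hx2⟩ :=
      two_edges_mem (R.walk p.1 p.2) (R.isPath p.1 p.2) hsup h1 h2
    refine Finset.one_lt_card.mpr ⟨e1, ?_, e2, ?_, hne12⟩
    · exact Finset.mem_filter.mpr ⟨(G.mem_incidenceFinset x _).mpr
        ⟨(R.walk p.1 p.2).edges_subset_edgeSet he1, hx1⟩, hpne, he1⟩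
    · exact Finset.mem_filter.mpr ⟨(G.mem_incidenceFinset x _).mpr
        ⟨(R.walk p.1 p.2).edges_subset_edgeSet he2, hx2⟩, hpne, he2⟩
  have hf2 : ∀ p ∈ T2, 1 ≤ f p := by
    rintro ⟨a, b⟩ hp
    simp only [hT2, Finset.mem_filter] at hp
    rcases hp.2 with ⟨h1, h2⟩ | ⟨h1, h2⟩
    · have hab : a ≠ b := fun hh => h2 (hh ▸ h1)
      obtain ⟨e, he, hae⟩ := first_edge_mem (R.walk a b) hab
      refine Finset.card_pos.mpr ⟨e, Finset.mem_filter.mpr ⟨(G.mem_incidenceFinset x _).mpr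
        ⟨(R.walk a b).edges_subset_edgeSet he, h1 ▸ hae⟩, hab, he⟩⟩
    · have hab : a ≠ b := fun hh => h2 (hh.trans h1)
      obtain ⟨e, he, hbe⟩ := first_edge_mem (R.walk a b).reverse hab.symm
      rw [SimpleGraph.Walk.edges_reverse, List.mem_reverse] at he
      refine Finset.card_pos.mpr ⟨e, Finset.mem_filter.mpr ⟨(G.mem_incidenceFinset x _).mpr
        ⟨(R.walk a b).edges_subset_edgeSet he, h1 ▸ hbe⟩, hab, he⟩⟩
  have hT1card : T1.card = Forwarding.vertexLoad R x := rfl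
  have hT2card : T2.card = 2 * (Fintype.card V - 1) := by
    have heq : T2 = ({x} ×ˢ ({x}ᶜ : Finset V)) ∪ (({x}ᶜ : Finset V) ×ˢ {x}) := by
      ext p
      simp only [hT2, Finset.mem_filter, Finset.mem_univ, true_and, Finset.mem_union,
        Finset.mem_product, Finset.mem_singleton, Finset.mem_compl]
      tauto
    have hd : Disjoint ({x} ×ˢ ({x}ᶜ : Finset V)) (({x}ᶜ : Finset V) ×ˢ {x}) := by
      rw [Finset.disjoint_left]
      rintro ⟨a, b⟩ h1 h2
      simp only [Finset.mem_product, Finset.mem_singleton, Finset.mem_compl] at h1 h2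
      exact h2.1 h1.1
    rw [heq, Finset.card_union_of_disjoint hd, Finset.card_product, Finset.card_product]
    simp only [Finset.card_singleton, Finset.card_compl]
    omega
  have hsum : 2 * Forwarding.vertexLoad R x + 2 * (Fintype.card V - 1) ≤
      ∑ e ∈ A, Forwarding.edgeLoad R e := by
    rw [key1]
    have h1 : ∑ p ∈ T1 ∪ T2, f p ≤ ∑ p ∈ (univ : Finset (V × V)), f p :=
      Finset.sum_le_sum_of_subset (Finset.subset_univ _)
    rw [Finset.sum_union hdisj] at h1
    have h2 : ∑ _p ∈ T1, 2 ≤ ∑ p ∈ T1, f p := Finset.sum_le_sum hf1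
    have h3 : ∑ _p ∈ T2, 1 ≤ ∑ p ∈ T2, f p := Finset.sum_le_sum hf2
    rw [Finset.sum_const, smul_eq_mul] at h2
    rw [Finset.sum_const, smul_eq_mul] at h3
    rw [hT1card] at h2
    rw [hT2card] at h3
    omega
  have hup : ∑ e ∈ A, Forwarding.edgeLoad R e ≤ G.maxDegree * Forwarding.piIdx G := by
    calc ∑ e ∈ A, Forwarding.edgeLoad R e ≤ A.card * Forwarding.piIdx G := by
          rw [← hR']
          simpa [Forwarding.routingEdgeIndex] using Finset.sum_le_card_nsmul A _ _
            (fun e _ => Finset.le_sup (f := Forwarding.edgeLoad R) (Finset.mem_univ e))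
      _ ≤ G.maxDegree * Forwarding.piIdx G := by
          rw [hA, G.card_incidenceFinset_eq_degree]
          exact Nat.mul_le_mul_right _ (G.degree_le_maxDegree x)
  have hxi : Forwarding.xi G ≤ Forwarding.vertexLoad R x := by
    have hmem : Forwarding.routingVertexIndex R ∈
        {k | ∃ R' : Forwarding.Routing G, Forwarding.routingVertexIndex R' = k} := ⟨R, rfl⟩
    have h : Forwarding.xi G ≤ Forwarding.routingVertexIndex R := Nat.sInf_le hmem
    rwa [Forwarding.routingVertexIndex, hx] at h
  omega
end

section
/- For every connected simple graph G on n vertices, one has π(G) ≤ ξ(G) + 2(n−1). -/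
open Finset

/-- For every connected simple graph `G` on `n` vertices,
`π(G) ≤ ξ(G) + 2(n-1)`. -/
theorem pi_le_xi_add {V : Type*} [Fintype V] [DecidableEq V]
    (G : SimpleGraph V) (hG : G.Connected) :
    Forwarding.piIdx G ≤ Forwarding.xi G + 2 * (Fintype.card V - 1) := by
  classical
  have hne : {k | ∃ R : Forwarding.Routing G, Forwarding.routingVertexIndex R = k}.Nonempty := by
    refine ⟨_, ⟨⟨fun x y => ((hG x y).some.toPath : G.Path x y).1,
      fun x y => ((hG x y).some.toPath : G.Path x y).2⟩, rfl⟩⟩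
  obtain ⟨R, hR⟩ := Nat.sInf_mem hne
  have key : ∀ e : Sym2 V,
      Forwarding.edgeLoad R e ≤ Forwarding.routingVertexIndex R + 2 * (Fintype.card V - 1) := by
    intro e
    induction e using Sym2.inductionOn with
    | hf a b =>
      set S := univ.filter (fun p : V × V => p.1 ≠ p.2 ∧ s(a,b) ∈ (R.walk p.1 p.2).edges) with hS
      set A := univ.filter (fun p : V × V =>
        p.1 ≠ p.2 ∧ a ∈ (R.walk p.1 p.2).support ∧ a ≠ p.1 ∧ a ≠ p.2) with hA
      set B := univ.filter (fun p : V × V => p.1 = a ∧ p.2 ≠ a) with hB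
      set C := univ.filter (fun p : V × V => p.2 = a ∧ p.1 ≠ a) with hC
      have hsub : S ⊆ A ∪ B ∪ C := by
        intro p hp
        simp only [hS, Finset.mem_filter, Finset.mem_univ, true_and] at hp
        obtain ⟨hpq, hedge⟩ := hp
        have hsup : a ∈ (R.walk p.1 p.2).support :=
          SimpleGraph.Walk.fst_mem_support_of_mem_edges _ hedge
        simp only [Finset.mem_union, hA, hB, hC, Finset.mem_filter, Finset.mem_univ, true_and]
        by_cases h1 : a = p.1
        · exact Or.inl (Or.inr ⟨h1.symm, fun h => hpq (h1 ▸ h ▸ rfl)⟩)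
        · by_cases h2 : a = p.2
          · exact Or.inr ⟨h2.symm, fun h => h1 h.symm⟩
          · exact Or.inl (Or.inl ⟨hpq, hsup, h1, h2⟩)
      have hBcard : B.card ≤ Fintype.card V - 1 := by
        have : B.card ≤ (univ.erase a).card := by
          apply Finset.card_le_card_of_injOn (fun p => p.2)
          · intro p hp
            simp only [hB, Finset.mem_coe, Finset.mem_filter] at hp
            simpa using hp.2.2
          · intro p hp q hq h
            simp only [hB, Finset.mem_coe, Finset.mem_filter] at hp hq
            exact Prod.ext (hp.2.1.trans hq.2.1.symm) h
        simpa [Finset.card_erase_of_mem] using this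
      have hCcard : C.card ≤ Fintype.card V - 1 := by
        have : C.card ≤ (univ.erase a).card := by
          apply Finset.card_le_card_of_injOn (fun p => p.1)
          · intro p hp
            simp only [hC, Finset.mem_coe, Finset.mem_filter] at hp
            simpa using hp.2.2
          · intro p hp q hq h
            simp only [hC, Finset.mem_coe, Finset.mem_filter] at hp hq
            exact Prod.ext h (hp.2.1.trans hq.2.1.symm)
        simpa [Finset.card_erase_of_mem] using this
      have hAcard : A.card ≤ Forwarding.routingVertexIndex R :=
        Finset.le_sup (f := Forwarding.vertexLoad R) (Finset.mem_univ a)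
      calc Forwarding.edgeLoad R s(a,b) = S.card := rfl
        _ ≤ (A ∪ B ∪ C).card := Finset.card_le_card hsub
        _ ≤ A.card + B.card + C.card :=
            le_trans (Finset.card_union_le _ _)
              (by exact Nat.add_le_add_right (Finset.card_union_le A B) _)
        _ ≤ Forwarding.routingVertexIndex R + 2 * (Fintype.card V - 1) := by
            have := add_le_add (add_le_add hAcard hBcard) hCcard
            omega
  have h1 : Forwarding.piIdx G ≤ Forwarding.routingEdgeIndex R :=
    Nat.sInf_le ⟨R, rfl⟩
  have h2 : Forwarding.routingEdgeIndex R ≤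
      Forwarding.routingVertexIndex R + 2 * (Fintype.card V - 1) :=
    Finset.sup_le fun e _ => key e
  rw [Forwarding.xi, ← hR] at *
  omega
end

section
/- Let Γ be a finite group of order n and S ⊆ Γ a generating set with S = S⁻¹ and 1 ∉ S, and let G = Cay(Γ,S) be the corresponding connected Cayley graph. Then ξ(G) = ξ_m(G) = Σ_{y∈Γ} d_G(x,y) − (n−1) for every vertex x of G (the value being independent of x). -/
open Finset

/-- The Cayley graph of a group `Γ` with respect to a symmetric connection
set `S` not containing `1`. -/
def cayleyGraph {Γ : Type*} [Group Γ] (S : Set Γ)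
    (hsymm : ∀ s ∈ S, s⁻¹ ∈ S) (h1 : (1 : Γ) ∉ S) : SimpleGraph Γ where
  Adj x y := x⁻¹ * y ∈ S
  symm := by
    constructor
    intro x y h
    have h' := hsymm _ h
    simpa [mul_inv_rev] using h'
  loopless := by
    constructor
    intro x h
    simp only [inv_mul_cancel] at h
    exact h1 h

set_option linter.unusedSectionVars false

namespace CayAux

variable {Γ : Type*} [Group Γ] [Fintype Γ] [DecidableEq Γ]
  (S : Set Γ) (hsymm : ∀ s ∈ S, s⁻¹ ∈ S) (h1 : (1 : Γ) ∉ S)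

/-- Left translation as a graph isomorphism of the Cayley graph. -/
def mulIso (a : Γ) : cayleyGraph S hsymm h1 ≃g cayleyGraph S hsymm h1 where
  toEquiv := Equiv.mulLeft a
  map_rel_iff' := by
    intro u v
    have h : (a * u)⁻¹ * (a * v) = u⁻¹ * v := by group
    show (a * u)⁻¹ * (a * v) ∈ S ↔ _
    rw [h]; rfl

lemma mulIso_apply (a u : Γ) : (mulIso S hsymm h1 a) u = a * u := rfl

lemma cayley_connected (hgen : Subgroup.closure S = ⊤) :
    (cayleyGraph S hsymm h1).Connected := by
  set G := cayleyGraph S hsymm h1 with hG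
  have reach1 : ∀ g : Γ, G.Reachable 1 g := by
    intro g
    have hg : g ∈ Subgroup.closure S := by rw [hgen]; trivial
    induction hg using Subgroup.closure_induction with
    | mem s hs => exact SimpleGraph.Adj.reachable (show (1:Γ)⁻¹ * s ∈ S by simpa using hs)
    | one => exact SimpleGraph.Reachable.refl 1
    | mul a b _ _ ha hb =>
        refine ha.trans ?_
        have := hb.map (mulIso S hsymm h1 a).toHom
        simpa [mulIso_apply] using this
    | inv a _ ha =>
        have := ha.map (mulIso S hsymm h1 a⁻¹).toHom
        refine SimpleGraph.Reachable.symm ?_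
        simpa [mulIso_apply] using this
  constructor
  intro u v
  have := (reach1 (u⁻¹ * v)).map (mulIso S hsymm h1 u).toHom
  simpa [mulIso_apply] using this

variable (hgen : Subgroup.closure S = ⊤)
include hgen

lemma dist_smul_le (a u v : Γ) :
    (cayleyGraph S hsymm h1).dist (a * u) (a * v) ≤ (cayleyGraph S hsymm h1).dist u v := by
  obtain ⟨p, hp⟩ :=
    ((cayley_connected S hsymm h1 hgen).exists_walk_length_eq_dist u v)
  have := SimpleGraph.dist_le
    ((p.map (mulIso S hsymm h1 a).toHom).copy (mulIso_apply ..) (mulIso_apply ..))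
  rwa [SimpleGraph.Walk.length_copy, SimpleGraph.Walk.length_map, hp] at this

lemma dist_smul (a u v : Γ) :
    (cayleyGraph S hsymm h1).dist (a * u) (a * v) = (cayleyGraph S hsymm h1).dist u v := by
  refine le_antisymm (dist_smul_le S hsymm h1 hgen a u v) ?_
  have := dist_smul_le S hsymm h1 hgen a⁻¹ (a * u) (a * v)
  simpa using this

lemma sum_dist_const (x : Γ) :
    ∑ y : Γ, (cayleyGraph S hsymm h1).dist x y
      = ∑ y : Γ, (cayleyGraph S hsymm h1).dist 1 y := by
  rw [← Equiv.sum_comp (Equiv.mulLeft x) (fun y => (cayleyGraph S hsymm h1).dist x y)]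
  refine Finset.sum_congr rfl fun y _ => ?_
  have := dist_smul S hsymm h1 hgen x 1 y
  simpa using this

/-- A chosen shortest path from `1` to `g`. -/
noncomputable def stdPath (g : Γ) : (cayleyGraph S hsymm h1).Walk 1 g :=
  ((cayley_connected S hsymm h1 hgen).exists_walk_length_eq_dist 1 g).choose

lemma stdPath_length (g : Γ) :
    (stdPath S hsymm h1 hgen g).length = (cayleyGraph S hsymm h1).dist 1 g :=
  ((cayley_connected S hsymm h1 hgen).exists_walk_length_eq_dist 1 g).choose_spec

lemma stdPath_isPath (g : Γ) : (stdPath S hsymm h1 hgen g).IsPath :=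
  SimpleGraph.Walk.isPath_of_length_eq_dist _ (stdPath_length ..)

/-- The translation-invariant routing of the Cayley graph. -/
noncomputable def stdRouting : Forwarding.Routing (cayleyGraph S hsymm h1) where
  walk u v := ((stdPath S hsymm h1 hgen (u⁻¹ * v)).map
      (mulIso S hsymm h1 u).toHom).copy (by simp [mulIso_apply]) (by simp [mulIso_apply])
  isPath u v := by
    rw [SimpleGraph.Walk.isPath_copy]
    exact SimpleGraph.Walk.map_isPath_of_injective
      (Equiv.injective _) (stdPath_isPath ..)

lemma stdRouting_isMinimal : (stdRouting S hsymm h1 hgen).IsMinimal := by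
  intro u v
  rw [stdRouting, SimpleGraph.Walk.length_copy, SimpleGraph.Walk.length_map, stdPath_length]
  have := dist_smul S hsymm h1 hgen u 1 (u⁻¹ * v)
  simpa using this.symm

lemma stdRouting_support (u v : Γ) :
    ((stdRouting S hsymm h1 hgen).walk u v).support
      = (stdPath S hsymm h1 hgen (u⁻¹ * v)).support.map (u * ·) := by
  rw [stdRouting, SimpleGraph.Walk.support_copy, SimpleGraph.Walk.support_map]
  rfl


lemma path_interior_card {u v : Γ} {w : (cayleyGraph S hsymm h1).Walk u v}
    (hw : w.IsPath) (huv : u ≠ v) :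
    (w.support.toFinset \ {u, v}).card = w.length - 1 := by
  have hsub : ({u, v} : Finset Γ) ⊆ w.support.toFinset := by
    intro z hz
    simp only [Finset.mem_insert, Finset.mem_singleton] at hz
    rcases hz with rfl | rfl <;> simp [SimpleGraph.Walk.start_mem_support,
      SimpleGraph.Walk.end_mem_support]
  rw [Finset.card_sdiff_of_subset hsub, List.toFinset_card_of_nodup hw.support_nodup,
    SimpleGraph.Walk.length_support]
  have h2 : ({u, v} : Finset Γ).card = 2 := by
    rw [Finset.card_insert_of_notMem (by simpa using huv), Finset.card_singleton]
  omega

lemma mem_stdRouting_support (u v x : Γ) :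
    x ∈ ((stdRouting S hsymm h1 hgen).walk u v).support
      ↔ u⁻¹ * x ∈ (stdPath S hsymm h1 hgen (u⁻¹ * v)).support := by
  rw [stdRouting_support, List.mem_map]
  constructor
  · rintro ⟨w, hw, rfl⟩; simpa using hw
  · intro hw; exact ⟨u⁻¹ * x, hw, by group⟩

lemma fiber_card (x g : Γ) :
    (univ.filter fun p : Γ × Γ =>
        (p.1 ≠ p.2 ∧ x ∈ ((stdRouting S hsymm h1 hgen).walk p.1 p.2).support
          ∧ x ≠ p.1 ∧ x ≠ p.2) ∧ p.1⁻¹ * p.2 = g).card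
      = (cayleyGraph S hsymm h1).dist 1 g - 1 := by
  rcases eq_or_ne g 1 with rfl | hg
  · rw [Finset.filter_false_of_mem, Finset.card_empty]
    · simp [SimpleGraph.dist_self]
    · rintro ⟨u, v⟩ _ ⟨⟨huv, -, -, -⟩, hone⟩
      exact huv (by simpa [inv_mul_eq_one] using hone)
  · rw [← stdPath_length S hsymm h1 hgen g,
      ← path_interior_card S hsymm h1 hgen (stdPath_isPath S hsymm h1 hgen g) (Ne.symm hg)]
    refine Finset.card_nbij' (fun p => p.1⁻¹ * x) (fun w => (x * w⁻¹, x * w⁻¹ * g))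
      ?_ ?_ ?_ ?_
    · rintro ⟨u, v⟩ hp
      simp only [Finset.mem_coe, Finset.mem_filter, Finset.mem_univ, true_and] at hp
      obtain ⟨⟨huv, hsupp, hx1, hx2⟩, hguv⟩ := hp
      rw [mem_stdRouting_support, hguv] at hsupp
      simp only [Finset.mem_coe, Finset.mem_sdiff, List.mem_toFinset, Finset.mem_insert,
        Finset.mem_singleton]
      refine ⟨hsupp, ?_⟩
      push_neg
      constructor
      · intro h; exact hx1 (by rw [inv_mul_eq_one] at h; exact h.symm)
      · intro h; apply hx2; rw [← hguv] at h
        have : x = u * (u⁻¹ * v) := by rw [← h]; group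
        simpa [mul_inv_cancel_left] using this
    · intro w hw
      simp only [Finset.mem_coe, Finset.mem_sdiff, List.mem_toFinset, Finset.mem_insert,
        Finset.mem_singleton, not_or] at hw
      obtain ⟨hsupp, hw1, hwg⟩ := hw
      simp only [Finset.mem_coe, Finset.mem_filter, Finset.mem_univ, true_and]
      have hinv : (x * w⁻¹)⁻¹ * (x * w⁻¹ * g) = g := by group
      refine ⟨⟨?_, ?_, ?_, ?_⟩, hinv⟩
      · intro h
        exact hg (mul_left_cancel ((mul_one (x * w⁻¹)).trans h)).symm
      · rw [mem_stdRouting_support, hinv]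
        have hxw : (x * w⁻¹)⁻¹ * x = w := by group
        rwa [hxw]
      · intro h
        apply hw1
        have h3 : x * w⁻¹ = x * 1 := by rw [mul_one]; exact h.symm
        exact inv_eq_one.mp (mul_left_cancel h3)
      · intro h
        apply hwg
        have h3 : x * (w⁻¹ * g) = x * 1 := by rw [mul_one, ← mul_assoc]; exact h.symm
        exact inv_mul_eq_one.mp (by simpa using mul_left_cancel h3)
    · rintro ⟨u, v⟩ hp
      simp only [Finset.mem_coe, Finset.mem_filter, Finset.mem_univ, true_and] at hp
      obtain ⟨⟨huv, hsupp, hx1, hx2⟩, hguv⟩ := hp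
      rw [← hguv]
      refine Prod.ext ?_ ?_ <;> dsimp only <;> group
    · intro w hw
      dsimp only
      group

lemma vertexLoad_stdRouting (x : Γ) :
    Forwarding.vertexLoad (stdRouting S hsymm h1 hgen) x
      = ∑ g : Γ, ((cayleyGraph S hsymm h1).dist 1 g - 1) := by
  rw [Forwarding.vertexLoad]
  rw [Finset.card_eq_sum_card_fiberwise
    (f := fun p : Γ × Γ => p.1⁻¹ * p.2) (t := univ) (fun _ _ => Finset.mem_univ _)]
  refine Finset.sum_congr rfl fun g _ => ?_
  rw [Finset.filter_filter]
  exact fiber_card S hsymm h1 hgen x g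

lemma sum_dist_sub_one :
    ∑ g : Γ, ((cayleyGraph S hsymm h1).dist 1 g - 1)
      = (∑ g : Γ, (cayleyGraph S hsymm h1).dist 1 g) - (Fintype.card Γ - 1) := by
  have hconn := cayley_connected S hsymm h1 hgen
  have hcard : (univ.erase (1 : Γ)).card = Fintype.card Γ - 1 := by
    rw [Finset.card_erase_of_mem (Finset.mem_univ _), Finset.card_univ]
  have e1 : ∑ g : Γ, ((cayleyGraph S hsymm h1).dist 1 g - 1)
      = ∑ g ∈ univ.erase 1, ((cayleyGraph S hsymm h1).dist 1 g - 1) :=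
    (Finset.sum_erase _ (by simp [SimpleGraph.dist_self])).symm
  have e2 : ∑ g : Γ, (cayleyGraph S hsymm h1).dist 1 g
      = ∑ g ∈ univ.erase 1, (cayleyGraph S hsymm h1).dist 1 g :=
    (Finset.sum_erase _ (by simp [SimpleGraph.dist_self])).symm
  rw [e1, e2, ← hcard]
  refine Nat.eq_sub_of_add_eq ?_
  rw [Finset.card_eq_sum_ones, ← Finset.sum_add_distrib]
  refine Finset.sum_congr rfl fun g hg => ?_
  have hg1 : g ≠ 1 := (Finset.mem_erase.mp hg).1
  have hpos : 0 < (cayleyGraph S hsymm h1).dist 1 g :=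
    hconn.pos_dist_of_ne (Ne.symm hg1)
  omega

lemma sum_dist_sub_one' (u : Γ) :
    ∑ v : Γ, ((cayleyGraph S hsymm h1).dist u v - 1)
      = (∑ g : Γ, (cayleyGraph S hsymm h1).dist 1 g) - (Fintype.card Γ - 1) := by
  rw [← sum_dist_sub_one S hsymm h1 hgen,
    ← Equiv.sum_comp (Equiv.mulLeft u) (fun v => (cayleyGraph S hsymm h1).dist u v - 1)]
  refine Finset.sum_congr rfl fun z _ => ?_
  have := dist_smul S hsymm h1 hgen u 1 z
  simp only [Equiv.coe_mulLeft]
  rw [show u * z = u * z from rfl]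
  have h' : (cayleyGraph S hsymm h1).dist u (u * z) = (cayleyGraph S hsymm h1).dist 1 z := by
    simpa using this
  rw [h']

lemma routingVertexIndex_stdRouting :
    Forwarding.routingVertexIndex (stdRouting S hsymm h1 hgen)
      = (∑ g : Γ, (cayleyGraph S hsymm h1).dist 1 g) - (Fintype.card Γ - 1) := by
  have hload : ∀ x : Γ, Forwarding.vertexLoad (stdRouting S hsymm h1 hgen) x
      = (∑ g : Γ, (cayleyGraph S hsymm h1).dist 1 g) - (Fintype.card Γ - 1) := fun x => by
    rw [vertexLoad_stdRouting S hsymm h1 hgen, sum_dist_sub_one S hsymm h1 hgen]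
  refine le_antisymm (Finset.sup_le fun x _ => (hload x).le) ?_
  exact hload 1 ▸ Finset.le_sup (Finset.mem_univ (1 : Γ))

lemma routingVertexIndex_lower (R : Forwarding.Routing (cayleyGraph S hsymm h1)) :
    (∑ g : Γ, (cayleyGraph S hsymm h1).dist 1 g) - (Fintype.card Γ - 1)
      ≤ Forwarding.routingVertexIndex R := by
  have hNpos : 0 < Fintype.card Γ := Fintype.card_pos
  have key : ∀ p : Γ × Γ, (cayleyGraph S hsymm h1).dist p.1 p.2 - 1
      ≤ ∑ x : Γ, (if p.1 ≠ p.2 ∧ x ∈ (R.walk p.1 p.2).support ∧ x ≠ p.1 ∧ x ≠ p.2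
          then 1 else 0) := by
    rintro ⟨u, v⟩
    rcases eq_or_ne u v with rfl | huv
    · simp [SimpleGraph.dist_self]
    · have hfil : (univ.filter fun x : Γ =>
          u ≠ v ∧ x ∈ (R.walk u v).support ∧ x ≠ u ∧ x ≠ v)
            = (R.walk u v).support.toFinset \ {u, v} := by
        ext z
        simp only [Finset.mem_filter, Finset.mem_univ, true_and, Finset.mem_sdiff,
          List.mem_toFinset, Finset.mem_insert, Finset.mem_singleton, not_or]
        tauto
      calc (cayleyGraph S hsymm h1).dist u v - 1 ≤ (R.walk u v).length - 1 :=
            Nat.sub_le_sub_right (SimpleGraph.dist_le _) 1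
        _ = ((R.walk u v).support.toFinset \ {u, v}).card :=
            (path_interior_card S hsymm h1 hgen (R.isPath u v) huv).symm
        _ = _ := by rw [← hfil, Finset.card_filter]
  have total_lower : Fintype.card Γ *
      ((∑ g : Γ, (cayleyGraph S hsymm h1).dist 1 g) - (Fintype.card Γ - 1))
      ≤ ∑ x : Γ, Forwarding.vertexLoad R x := by
    have e : ∑ x : Γ, Forwarding.vertexLoad R x
        = ∑ p : Γ × Γ, ∑ x : Γ,
            (if p.1 ≠ p.2 ∧ x ∈ (R.walk p.1 p.2).support ∧ x ≠ p.1 ∧ x ≠ p.2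
              then 1 else 0) := by
      rw [Finset.sum_comm]
      refine Finset.sum_congr rfl fun x _ => ?_
      rw [Forwarding.vertexLoad, Finset.card_filter]
    rw [e]
    calc Fintype.card Γ *
          ((∑ g : Γ, (cayleyGraph S hsymm h1).dist 1 g) - (Fintype.card Γ - 1))
          = ∑ _u : Γ, ((∑ g : Γ, (cayleyGraph S hsymm h1).dist 1 g) - (Fintype.card Γ - 1)) := by
          rw [Finset.sum_const, smul_eq_mul, Finset.card_univ]
      _ = ∑ u : Γ, ∑ v : Γ, ((cayleyGraph S hsymm h1).dist u v - 1) := by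
          refine Finset.sum_congr rfl fun u _ => ?_
          rw [sum_dist_sub_one' S hsymm h1 hgen u]
      _ = ∑ p : Γ × Γ, ((cayleyGraph S hsymm h1).dist p.1 p.2 - 1) := by
          rw [Fintype.sum_prod_type]
      _ ≤ _ := Finset.sum_le_sum fun p _ => key p
  have total_upper : ∑ x : Γ, Forwarding.vertexLoad R x
      ≤ Fintype.card Γ * Forwarding.routingVertexIndex R := by
    have := Finset.sum_le_card_nsmul univ (Forwarding.vertexLoad R)
      (Forwarding.routingVertexIndex R) (fun x _ => Finset.le_sup (Finset.mem_univ x))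
    simpa [Finset.card_univ, mul_comm] using this
  exact Nat.le_of_mul_le_mul_left (total_lower.trans total_upper) hNpos

end CayAux

/-- For a connected Cayley graph `G = Cay(Γ,S)` on `n`
vertices, `ξ(G) = ξ_m(G) = Σ_{y ∈ Γ} d_G(x,y) - (n-1)` for every vertex `x`. -/
theorem cayley_forwarding_index {Γ : Type*} [Group Γ] [Fintype Γ] [DecidableEq Γ]
    (S : Set Γ) (hsymm : ∀ s ∈ S, s⁻¹ ∈ S) (h1 : (1 : Γ) ∉ S)
    (hgen : Subgroup.closure S = ⊤) (x : Γ) :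
    Forwarding.xi (cayleyGraph S hsymm h1) =
        (∑ y : Γ, (cayleyGraph S hsymm h1).dist x y) - (Fintype.card Γ - 1) ∧
    Forwarding.xiMin (cayleyGraph S hsymm h1) =
        (∑ y : Γ, (cayleyGraph S hsymm h1).dist x y) - (Fintype.card Γ - 1) := by
  have hx := CayAux.sum_dist_const S hsymm h1 hgen x
  have hstd := CayAux.routingVertexIndex_stdRouting S hsymm h1 hgen
  have hmin := CayAux.stdRouting_isMinimal S hsymm h1 hgen
  have hlow := CayAux.routingVertexIndex_lower S hsymm h1 hgen
  rw [hx, ← hstd]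
  constructor
  · refine le_antisymm (Nat.sInf_le ⟨CayAux.stdRouting S hsymm h1 hgen, rfl⟩) ?_
    refine le_csInf ⟨_, CayAux.stdRouting S hsymm h1 hgen, rfl⟩ ?_
    rintro k ⟨R, rfl⟩
    exact hstd ▸ hlow R
  · refine le_antisymm (Nat.sInf_le ⟨CayAux.stdRouting S hsymm h1 hgen, hmin, rfl⟩) ?_
    refine le_csInf ⟨_, CayAux.stdRouting S hsymm h1 hgen, hmin, rfl⟩ ?_
    rintro k ⟨R, -, rfl⟩
    exact hstd ▸ hlow R
end

section
/- Let G and G' be connected simple graphs of orders n and n', respectively. Then the Cartesian (box) product G □ G' satisfies ξ(G □ G') ≤ n·ξ(G') + n'·ξ(G) + (n−1)(n'−1). -/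
open Finset

section Aux

open SimpleGraph Forwarding

variable {V : Type*} [Fintype V] [DecidableEq V]

/-- Appending two paths whose supports meet only at the junction gives a path. -/
lemma aux_isPath_append {G : SimpleGraph V} {u v w : V} {p : G.Walk u v} {q : G.Walk v w}
    (hp : p.IsPath) (hq : q.IsPath)
    (h : ∀ x, x ∈ p.support → x ∈ q.support → x = v) : (p.append q).IsPath := by
  rw [SimpleGraph.Walk.isPath_def, SimpleGraph.Walk.support_append]
  refine List.Nodup.append hp.support_nodup ?_ ?_
  · exact hq.support_nodup.tail
  · intro x hxp hxq
    have hxq' : x ∈ q.support := List.mem_of_mem_tail hxq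
    have hxv : x = v := h x hxp hxq'
    have : v ∉ q.support.tail := by
      have := hq.support_nodup
      rw [q.support_eq_cons] at this
      exact List.Nodup.notMem this
    exact this (hxv ▸ hxq)

/-- Every connected graph has a routing. -/
noncomputable def auxRouting {G : SimpleGraph V} (hG : G.Connected) : Routing G where
  walk x y := ((hG.preconnected x y).some.toPath : G.Path x y).1
  isPath x y := ((hG.preconnected x y).some.toPath).2

lemma aux_exists_routing_index {G : SimpleGraph V} (hG : G.Connected) :
    ∃ R : Routing G, routingVertexIndex R = xi G := by
  have hne : {k | ∃ R : Routing G, routingVertexIndex R = k}.Nonempty :=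
    ⟨routingVertexIndex (auxRouting hG), auxRouting hG, rfl⟩
  exact Nat.sInf_mem hne

lemma aux_vertexLoad_le {G : SimpleGraph V} (R : Routing G) (x : V) :
    vertexLoad R x ≤ routingVertexIndex R :=
  Finset.le_sup (Finset.mem_univ x)

/-- A walk which is a path from a vertex to itself has singleton support. -/
lemma aux_support_self {G : SimpleGraph V} {u : V} {p : G.Walk u u} (hp : p.IsPath) :
    p.support = [u] := by
  rw [(SimpleGraph.Walk.isPath_iff_eq_nil (p := p)).mp hp]; rfl

end Aux

/-- For connected graphs `G`, `G'` of orders `n`, `n'`,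
`ξ(G □ G') ≤ n·ξ(G') + n'·ξ(G) + (n-1)(n'-1)`. -/
theorem xi_boxProd_upper_bound {V V' : Type*} [Fintype V] [DecidableEq V]
    [Fintype V'] [DecidableEq V'] (G : SimpleGraph V) (G' : SimpleGraph V')
    (hG : G.Connected) (hG' : G'.Connected) :
    Forwarding.xi (G.boxProd G') ≤
      Fintype.card V * Forwarding.xi G' + Fintype.card V' * Forwarding.xi G +
        (Fintype.card V - 1) * (Fintype.card V' - 1) := by
  classical
  obtain ⟨R, hR⟩ := aux_exists_routing_index hG
  obtain ⟨R', hR'⟩ := aux_exists_routing_index hG'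
  -- the product routing: go horizontally first, then vertically
  set S : Forwarding.Routing (G.boxProd G') :=
    { walk := fun x y =>
        ((R.walk x.1 y.1).boxProdLeft G' x.2).append ((R'.walk x.2 y.2).boxProdRight G y.1)
      isPath := fun x y => by
        refine aux_isPath_append ?_ ?_ ?_
        · exact SimpleGraph.Walk.map_isPath_of_injective
            (SimpleGraph.boxProdLeft G G' x.2).injective (R.isPath x.1 y.1)
        · exact SimpleGraph.Walk.map_isPath_of_injective
            (SimpleGraph.boxProdRight G G' y.1).injective (R'.isPath x.2 y.2)
        · intro z hz1 hz2
          simp only [SimpleGraph.Walk.boxProdLeft, SimpleGraph.Walk.boxProdRight,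
            SimpleGraph.Walk.support_map, List.mem_map] at hz1 hz2
          replace hz1 : z ∈ (R.walk x.1 y.1).support.map (G.boxProdLeft G' x.2).toHom := by
            rw [← SimpleGraph.Walk.support_map]; exact hz1
          replace hz2 : z ∈ (R'.walk x.2 y.2).support.map (G.boxProdRight G' y.1).toHom := by
            rw [← SimpleGraph.Walk.support_map]; exact hz2
          rw [List.mem_map] at hz1 hz2
          obtain ⟨a, _, ha⟩ := hz1
          obtain ⟨b, _, hb⟩ := hz2
          have h1 : z.2 = x.2 := by rw [← ha]; rfl
          have h2 : z.1 = y.1 := by rw [← hb]; rfl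
          exact Prod.ext h2 h1 } with hS
  have key : ∀ x : V × V', Forwarding.vertexLoad S x ≤
      Fintype.card V * Forwarding.xi G' + Fintype.card V' * Forwarding.xi G +
        (Fintype.card V - 1) * (Fintype.card V' - 1) := by
    intro x
    set S1 : Finset ((V × V') × (V × V')) := Finset.univ.filter fun p =>
      p.1.2 = x.2 ∧ p.1.1 ≠ p.2.1 ∧ x.1 ∈ (R.walk p.1.1 p.2.1).support ∧
        x.1 ≠ p.1.1 ∧ x.1 ≠ p.2.1 with hS1
    set S2 : Finset ((V × V') × (V × V')) := Finset.univ.filter fun p =>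
      p.2.1 = x.1 ∧ p.1.2 ≠ p.2.2 ∧ x.2 ∈ (R'.walk p.1.2 p.2.2).support ∧
        x.2 ≠ p.1.2 ∧ x.2 ≠ p.2.2 with hS2
    set S3 : Finset ((V × V') × (V × V')) := Finset.univ.filter fun p =>
      p.2.1 = x.1 ∧ p.1.2 = x.2 ∧ p.1.1 ≠ x.1 ∧ p.2.2 ≠ x.2 with hS3
    have hsub : (Finset.univ.filter fun p : (V × V') × (V × V') =>
        p.1 ≠ p.2 ∧ x ∈ (S.walk p.1 p.2).support ∧ x ≠ p.1 ∧ x ≠ p.2) ⊆ S1 ∪ S2 ∪ S3 := by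
      intro p hp
      obtain ⟨⟨u, u'⟩, v, v'⟩ := p
      obtain ⟨a, a'⟩ := x
      simp only [Finset.mem_filter, Finset.mem_univ, true_and] at hp
      obtain ⟨hne, hmem, hx1, hx2⟩ := hp
      have hmem' := (SimpleGraph.Walk.mem_support_append_iff _ _).mp hmem
      replace hmem : (a, a') ∈ (R.walk u v).support.map (G.boxProdLeft G' u').toHom ∨
          (a, a') ∈ (R'.walk u' v').support.map (G.boxProdRight G' v).toHom := by
        rcases hmem' with h | h
        · left; rw [← SimpleGraph.Walk.support_map]; exact h
        · right; rw [← SimpleGraph.Walk.support_map]; exact h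
      simp only [SimpleGraph.Walk.mem_support_append_iff, SimpleGraph.Walk.boxProdLeft,
        SimpleGraph.Walk.boxProdRight, SimpleGraph.Walk.support_map, List.mem_map] at hmem
      simp only [Finset.mem_union, hS1, hS2, hS3, Finset.mem_filter, Finset.mem_univ, true_and]
      rcases hmem with ⟨c, hc, hcx⟩ | ⟨c, hc, hcx⟩
      · -- x is on the horizontal part
        have h2 : a' = u' := by
          have := congrArg Prod.snd hcx; simpa using this.symm
        have h1 : a = c := by
          have := congrArg Prod.fst hcx; simpa using this.symm
        subst h1; subst h2
        have hxn1 : a ≠ u := fun h => hx1 (by simp [h])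
        by_cases hcc : a = v
        · exact Or.inr ⟨hcc.symm, rfl, fun h => hxn1 h.symm,
            fun h => hx2 (by simp [hcc, h.symm])⟩
        · refine Or.inl (Or.inl ⟨rfl, fun h => ?_, hc, hxn1, hcc⟩)
          subst h
          rw [aux_support_self (R.isPath u u)] at hc
          simp at hc
          exact hxn1 hc
      · -- x is on the vertical part
        have h1 : a = v := by
          have := congrArg Prod.fst hcx; simpa using this.symm
        have h2 : a' = c := by
          have := congrArg Prod.snd hcx; simpa using this.symm
        subst h1; subst h2
        have hxn2 : a' ≠ v' := fun h => hx2 (by simp [h])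
        by_cases hcc : a' = u'
        · exact Or.inr ⟨rfl, hcc.symm, fun h => hx1 (by simp [h.symm, hcc]),
            fun h => hxn2 h.symm⟩
        · refine Or.inl (Or.inr ⟨rfl, fun h => ?_, hc, hcc, hxn2⟩)
          subst h
          rw [aux_support_self (R'.isPath u' u')] at hc
          simp at hc
          exact hcc hc
    have hc1 : S1.card ≤ Fintype.card V' * Forwarding.xi G := by
      have : S1.card ≤ (Finset.univ ×ˢ (Finset.univ.filter fun q : V × V =>
          q.1 ≠ q.2 ∧ x.1 ∈ (R.walk q.1 q.2).support ∧ x.1 ≠ q.1 ∧ x.1 ≠ q.2) :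
            Finset (V' × (V × V))).card := by
        apply Finset.card_le_card_of_injOn (fun p => (p.2.2, (p.1.1, p.2.1)))
        · intro p hp
          simp only [hS1, Finset.mem_coe, Finset.mem_filter, Finset.mem_univ, true_and] at hp
          simp only [Finset.mem_coe, Finset.mem_product, Finset.mem_filter, Finset.mem_univ, true_and]
          exact hp.2
        · intro p hp q hq hpq
          simp only [hS1, Finset.mem_coe, Finset.mem_filter, Finset.mem_univ, true_and] at hp hq
          simp only [Prod.mk.injEq] at hpq
          obtain ⟨h1, h2, h3⟩ := hpq
          exact Prod.ext (Prod.ext h2 (hp.1.trans hq.1.symm)) (Prod.ext h3 h1)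
      rw [Finset.card_product, Finset.card_univ] at this
      calc S1.card ≤ Fintype.card V' * Forwarding.vertexLoad R x.1 := this
        _ ≤ Fintype.card V' * Forwarding.xi G := by
            exact Nat.mul_le_mul_left _ (hR ▸ aux_vertexLoad_le R x.1)
    have hc2 : S2.card ≤ Fintype.card V * Forwarding.xi G' := by
      have : S2.card ≤ (Finset.univ ×ˢ (Finset.univ.filter fun q : V' × V' =>
          q.1 ≠ q.2 ∧ x.2 ∈ (R'.walk q.1 q.2).support ∧ x.2 ≠ q.1 ∧ x.2 ≠ q.2) :
            Finset (V × (V' × V'))).card := by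
        apply Finset.card_le_card_of_injOn (fun p => (p.1.1, (p.1.2, p.2.2)))
        · intro p hp
          simp only [hS2, Finset.mem_coe, Finset.mem_filter, Finset.mem_univ, true_and] at hp
          simp only [Finset.mem_coe, Finset.mem_product, Finset.mem_filter, Finset.mem_univ, true_and]
          exact hp.2
        · intro p hp q hq hpq
          simp only [hS2, Finset.mem_coe, Finset.mem_filter, Finset.mem_univ, true_and] at hp hq
          simp only [Prod.mk.injEq] at hpq
          obtain ⟨h1, h2, h3⟩ := hpq
          exact Prod.ext (Prod.ext h1 h2) (Prod.ext (hp.1.trans hq.1.symm) h3)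
      rw [Finset.card_product, Finset.card_univ] at this
      calc S2.card ≤ Fintype.card V * Forwarding.vertexLoad R' x.2 := this
        _ ≤ Fintype.card V * Forwarding.xi G' := by
            exact Nat.mul_le_mul_left _ (hR' ▸ aux_vertexLoad_le R' x.2)
    have hc3 : S3.card ≤ (Fintype.card V - 1) * (Fintype.card V' - 1) := by
      have : S3.card ≤ ((Finset.univ.erase x.1) ×ˢ (Finset.univ.erase x.2)).card := by
        apply Finset.card_le_card_of_injOn (fun p => (p.1.1, p.2.2))
        · intro p hp
          simp only [hS3, Finset.mem_coe, Finset.mem_filter, Finset.mem_univ, true_and] at hp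
          simp only [Finset.mem_coe, Finset.mem_product, Finset.mem_erase, Finset.mem_univ, and_true]
          exact ⟨hp.2.2.1, hp.2.2.2⟩
        · intro p hp q hq hpq
          simp only [hS3, Finset.mem_coe, Finset.mem_filter, Finset.mem_univ, true_and] at hp hq
          simp only [Prod.mk.injEq] at hpq
          exact Prod.ext (Prod.ext hpq.1 (hp.2.1.trans hq.2.1.symm))
            (Prod.ext (hp.1.trans hq.1.symm) hpq.2)
      rwa [Finset.card_product, Finset.card_erase_of_mem (Finset.mem_univ _),
        Finset.card_erase_of_mem (Finset.mem_univ _), Finset.card_univ, Finset.card_univ] at this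
    calc Forwarding.vertexLoad S x ≤ (S1 ∪ S2 ∪ S3).card := by
          have h := Finset.card_le_card hsub
          unfold Forwarding.vertexLoad
          convert h using 3
      _ ≤ (S1 ∪ S2).card + S3.card := Finset.card_union_le _ _
      _ ≤ S1.card + S2.card + S3.card := by
          exact Nat.add_le_add_right (Finset.card_union_le _ _) _
      _ ≤ Fintype.card V' * Forwarding.xi G + Fintype.card V * Forwarding.xi G' +
            (Fintype.card V - 1) * (Fintype.card V' - 1) := by
          omega
      _ = Fintype.card V * Forwarding.xi G' + Fintype.card V' * Forwarding.xi G +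
            (Fintype.card V - 1) * (Fintype.card V' - 1) := by ring
  have hxi : Forwarding.xi (G.boxProd G') ≤ Forwarding.routingVertexIndex S :=
    Nat.sInf_le ⟨S, rfl⟩
  refine hxi.trans ?_
  exact Finset.sup_le fun x _ => key x
end

section
/- Let G and G' be connected simple graphs of orders n and n', respectively. Then the Cartesian (box) product G □ G' satisfies π(G □ G') ≤ max{n·π(G'), n'·π(G)}. -/
open Finset

section Aux

open SimpleGraph Forwarding

variable {V V' : Type*} [Fintype V] [DecidableEq V] [Fintype V'] [DecidableEq V']
variable {G : SimpleGraph V} {G' : SimpleGraph V'}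

/-- Every connected graph has a routing. -/
noncomputable def someRouting (G : SimpleGraph V) (hG : G.Connected) :
    Forwarding.Routing G where
  walk x y := ((hG.preconnected x y).some.toPath : G.Walk x y)
  isPath x y := ((hG.preconnected x y).some.toPath).prop

lemma mem_edges_boxProdLeft {u v : V} {b : V'} {w : G.Walk u v} {x y : V × V'}
    (h : s(x, y) ∈ (w.boxProdLeft G' b).edges) :
    x.2 = b ∧ y.2 = b ∧ s(x.1, y.1) ∈ w.edges := by
  replace h : s(x, y) ∈ (w.map (G.boxProdLeft G' b).toHom).edges := h
  rw [SimpleGraph.Walk.edges_map, List.mem_map] at h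
  obtain ⟨e, he, heq⟩ := h
  induction e using Sym2.ind with
  | _ c d =>
    rw [Sym2.map_pair_eq, Sym2.eq_iff] at heq
    rcases heq with ⟨h1, h2⟩ | ⟨h1, h2⟩ <;>
      simp only [SimpleGraph.Embedding.coe_toHom, SimpleGraph.boxProdLeft_apply] at h1 h2 <;>
      subst h1 <;> subst h2 <;>
      simp [he, Sym2.eq_swap]

lemma mem_edges_boxProdRight {u v : V'} {a : V} {w : G'.Walk u v} {x y : V × V'}
    (h : s(x, y) ∈ (w.boxProdRight G a).edges) :
    x.1 = a ∧ y.1 = a ∧ s(x.2, y.2) ∈ w.edges := by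
  replace h : s(x, y) ∈ (w.map (G.boxProdRight G' a).toHom).edges := h
  rw [SimpleGraph.Walk.edges_map, List.mem_map] at h
  obtain ⟨e, he, heq⟩ := h
  induction e using Sym2.ind with
  | _ c d =>
    rw [Sym2.map_pair_eq, Sym2.eq_iff] at heq
    rcases heq with ⟨h1, h2⟩ | ⟨h1, h2⟩ <;>
      simp only [SimpleGraph.Embedding.coe_toHom, SimpleGraph.boxProdRight_apply] at h1 h2 <;>
      subst h1 <;> subst h2 <;>
      simp [he, Sym2.eq_swap]

/-- A path from a vertex to itself has no edges. -/
lemma Forwarding.Routing.edges_self {G : SimpleGraph V} (R : Routing G) (u : V) :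
    (R.walk u u).edges = [] := by
  have := (SimpleGraph.Walk.isPath_iff_eq_nil).mp (R.isPath u u)
  rw [this]; rfl

lemma edgeLoad_le_piIdx_of_eq {G : SimpleGraph V} {R : Routing G}
    (hR : routingEdgeIndex R = piIdx G) (e : Sym2 V) : edgeLoad R e ≤ piIdx G :=
  hR ▸ Finset.le_sup (Finset.mem_univ e)

end Aux

/-- For connected graphs `G`, `G'` of orders `n`, `n'`,
`π(G □ G') ≤ max{n·π(G'), n'·π(G)}`. -/
theorem pi_boxProd_upper_bound {V V' : Type*} [Fintype V] [DecidableEq V]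
    [Fintype V'] [DecidableEq V'] (G : SimpleGraph V) (G' : SimpleGraph V')
    (hG : G.Connected) (hG' : G'.Connected) :
    Forwarding.piIdx (G.boxProd G') ≤
      max (Fintype.card V * Forwarding.piIdx G')
        (Fintype.card V' * Forwarding.piIdx G) := by
  classical
  obtain ⟨R, hR⟩ : ∃ R : Forwarding.Routing G,
      Forwarding.routingEdgeIndex R = Forwarding.piIdx G :=
    Nat.sInf_mem (s := {k | ∃ R : Forwarding.Routing G, Forwarding.routingEdgeIndex R = k})
      ⟨Forwarding.routingEdgeIndex (someRouting G hG), someRouting G hG, rfl⟩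
  obtain ⟨R', hR'⟩ : ∃ R' : Forwarding.Routing G',
      Forwarding.routingEdgeIndex R' = Forwarding.piIdx G' :=
    Nat.sInf_mem (s := {k | ∃ R : Forwarding.Routing G', Forwarding.routingEdgeIndex R = k})
      ⟨Forwarding.routingEdgeIndex (someRouting G' hG'), someRouting G' hG', rfl⟩
  let S : Forwarding.Routing (G.boxProd G') :=
    { walk := fun p q => (((R.walk p.1 q.1).boxProdLeft G' p.2).append
        ((R'.walk p.2 q.2).boxProdRight G q.1)).bypass
      isPath := fun p q => SimpleGraph.Walk.bypass_isPath _ }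
  refine le_trans (Nat.sInf_le ⟨S, rfl⟩) (Finset.sup_le fun e _ => ?_)
  induction e using Sym2.ind with
  | _ x y =>
  -- basic fact: membership in the composite walk's edges splits
  have hsplit : ∀ p q : V × V', s(x, y) ∈ (S.walk p q).edges →
      s(x, y) ∈ ((R.walk p.1 q.1).boxProdLeft G' p.2).edges ∨
      s(x, y) ∈ ((R'.walk p.2 q.2).boxProdRight G q.1).edges := by
    intro p q h
    have h2 := SimpleGraph.Walk.edges_bypass_subset
      (((R.walk p.1 q.1).boxProdLeft G' p.2).append
        ((R'.walk p.2 q.2).boxProdRight G q.1)) h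
    rwa [SimpleGraph.Walk.edges_append, List.mem_append] at h2
  by_cases h2 : x.2 = y.2
  · by_cases h1 : x.1 = y.1
    · -- degenerate: x = y, no walk contains this "edge"
      have hxy : x = y := Prod.ext h1 h2
      have : Forwarding.edgeLoad S s(x, y) = 0 := by
        rw [Forwarding.edgeLoad, Finset.card_eq_zero, Finset.filter_eq_empty_iff]
        rintro p -
        rintro ⟨-, hmem⟩
        have := SimpleGraph.Walk.edges_subset_edgeSet _ hmem
        rw [SimpleGraph.mem_edgeSet] at this
        exact (G.boxProd G').irrefl (hxy ▸ this)
      simp [this]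
    · -- G-direction edge
      refine le_trans ?_ (le_max_right _ _)
      have hcard : Forwarding.edgeLoad S s(x, y) ≤
          ((Finset.univ.filter fun q : V × V =>
              q.1 ≠ q.2 ∧ s(x.1, y.1) ∈ (R.walk q.1 q.2).edges) ×ˢ
            (Finset.univ : Finset V')).card := by
        refine Finset.card_le_card_of_injOn
          (fun p => ((p.1.1, p.2.1), p.2.2)) ?_ ?_
        · intro p hp
          rw [Finset.mem_coe, Finset.mem_filter] at hp
          obtain ⟨-, hne, hmem⟩ := hp
          rcases hsplit _ _ hmem with hl | hr
          · obtain ⟨-, -, hmm⟩ := mem_edges_boxProdLeft hl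
            have huv : p.1.1 ≠ p.2.1 := by
              intro hc
              rw [hc, R.edges_self] at hmm
              exact (List.not_mem_nil hmm)
            simp [Finset.mem_product, huv, hmm]
          · obtain ⟨ha, hb, -⟩ := mem_edges_boxProdRight hr
            exact absurd (ha.trans hb.symm) h1
        · intro p hp q hq heq
          rw [Finset.coe_filter, Set.mem_setOf_eq] at hp hq
          have hp2 : p.1.2 = x.2 := by
            rcases hsplit _ _ hp.2.2 with hl | hr
            · exact (mem_edges_boxProdLeft hl).1.symm
            · exact absurd (((mem_edges_boxProdRight hr).1).trans
                ((mem_edges_boxProdRight hr).2.1).symm) h1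
          have hq2 : q.1.2 = x.2 := by
            rcases hsplit _ _ hq.2.2 with hl | hr
            · exact (mem_edges_boxProdLeft hl).1.symm
            · exact absurd (((mem_edges_boxProdRight hr).1).trans
                ((mem_edges_boxProdRight hr).2.1).symm) h1
          have e1 : p.1.1 = q.1.1 := congrArg (fun z => z.1.1) heq
          have e2 : p.2.1 = q.2.1 := congrArg (fun z => z.1.2) heq
          have e3 : p.2.2 = q.2.2 := congrArg (fun z => z.2) heq
          exact Prod.ext (Prod.ext e1 (hp2.trans hq2.symm)) (Prod.ext e2 e3)
      refine hcard.trans ?_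
      rw [Finset.card_product, Finset.card_univ]
      calc _ ≤ Forwarding.piIdx G * Fintype.card V' :=
              Nat.mul_le_mul_right _ (edgeLoad_le_piIdx_of_eq hR _)
        _ = Fintype.card V' * Forwarding.piIdx G := Nat.mul_comm _ _
  · -- G'-direction edge
    refine le_trans ?_ (le_max_left _ _)
    have hcard : Forwarding.edgeLoad S s(x, y) ≤
        ((Finset.univ : Finset V) ×ˢ
          (Finset.univ.filter fun q : V' × V' =>
            q.1 ≠ q.2 ∧ s(x.2, y.2) ∈ (R'.walk q.1 q.2).edges)).card := by
      refine Finset.card_le_card_of_injOn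
        (fun p => (p.1.1, (p.1.2, p.2.2))) ?_ ?_
      · intro p hp
        rw [Finset.mem_coe, Finset.mem_filter] at hp
        obtain ⟨-, hne, hmem⟩ := hp
        rcases hsplit _ _ hmem with hl | hr
        · obtain ⟨ha, hb, -⟩ := mem_edges_boxProdLeft hl
          exact absurd (ha.trans hb.symm) h2
        · obtain ⟨-, -, hmm⟩ := mem_edges_boxProdRight hr
          have huv : p.1.2 ≠ p.2.2 := by
            intro hc
            rw [hc, R'.edges_self] at hmm
            exact (List.not_mem_nil hmm)
          simp [Finset.mem_product, huv, hmm]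
      · intro p hp q hq heq
        rw [Finset.coe_filter, Set.mem_setOf_eq] at hp hq
        have hp1 : p.2.1 = x.1 := by
          rcases hsplit _ _ hp.2.2 with hl | hr
          · exact absurd (((mem_edges_boxProdLeft hl).1).trans
              ((mem_edges_boxProdLeft hl).2.1).symm) h2
          · exact (mem_edges_boxProdRight hr).1.symm
        have hq1 : q.2.1 = x.1 := by
          rcases hsplit _ _ hq.2.2 with hl | hr
          · exact absurd (((mem_edges_boxProdLeft hl).1).trans
              ((mem_edges_boxProdLeft hl).2.1).symm) h2
          · exact (mem_edges_boxProdRight hr).1.symm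
        have e1 : p.1.1 = q.1.1 := congrArg (fun z => z.1) heq
        have e2 : p.1.2 = q.1.2 := congrArg (fun z => z.2.1) heq
        have e3 : p.2.2 = q.2.2 := congrArg (fun z => z.2.2) heq
        exact Prod.ext (Prod.ext e1 e2) (Prod.ext (hp1.trans hq1.symm) e3)
    refine hcard.trans ?_
    rw [Finset.card_product, Finset.card_univ]
    exact Nat.mul_le_mul_left _ (edgeLoad_le_piIdx_of_eq hR' _)
end

section
/- If G is a 2-connected simple graph on n vertices, then 2·ξ(G) ≤ (n−2)(n−3), i.e., ξ(G) ≤ (n−2)(n−3)/2. -/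
open Finset

/-- `G` is `k`-connected: `n > k` and removing any set of fewer than `k`
vertices leaves a connected induced subgraph. -/
def IsKConnected {V : Type*} [Fintype V] (k : ℕ) (G : SimpleGraph V) : Prop :=
  k < Fintype.card V ∧
    ∀ s : Finset V, s.card < k → (G.induce ((↑s : Set V)ᶜ)).Connected


section Aux
open SimpleGraph
set_option linter.unusedSectionVars false


variable {V : Type*} [DecidableEq V] {G : SimpleGraph V}

/-- Appending two paths which share only the junction vertex gives a path. -/
lemma append_isPath {a b c : V} {p : G.Walk a b} {q : G.Walk b c}
    (hp : p.IsPath) (hq : q.IsPath)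
    (h : ∀ z, z ∈ p.support → z ∈ q.support → z = b) : (p.append q).IsPath := by
  rw [Walk.isPath_def, Walk.support_append]
  refine List.Nodup.append hp.support_nodup ((Walk.isPath_def _).mp hq).tail ?_
  intro z hz1 hz2
  have hz2' : z ∈ q.support := List.mem_of_mem_tail hz2
  have hzb := h z hz1 hz2'
  rw [hzb] at hz2
  have hcons : q.support = b :: q.support.tail := q.support_eq_cons
  have hnd := hq.support_nodup
  rw [hcons] at hnd
  exact (List.nodup_cons.mp hnd).1 hz2

lemma end_mem_takeUntil {a b c : V} {p : G.Walk a b} (hp : p.IsPath)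
    (h : c ∈ p.support) (hb : b ∈ (p.takeUntil c h).support) : b = c := by
  have hsplit := p.take_spec h
  have hnd : (p.support).Nodup := hp.support_nodup
  rw [← hsplit, Walk.support_append] at hnd
  have hb' : b ∈ (p.dropUntil c h).support := Walk.end_mem_support _
  by_contra hne
  have : b ∈ (p.dropUntil c h).support.tail := by
    have := (p.dropUntil c h).support_eq_cons
    rw [this] at hb'
    rcases List.mem_cons.mp hb' with h1 | h1
    · exact absurd h1 hne
    · exact h1
  exact (List.disjoint_of_nodup_append hnd) hb this

lemma mem_takeUntil_mem_dropUntil {a b c z : V} {p : G.Walk a b} (hp : p.IsPath)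
    (h : c ∈ p.support) (h1 : z ∈ (p.takeUntil c h).support)
    (h2 : z ∈ (p.dropUntil c h).support) : z = c := by
  have hsplit := p.take_spec h
  have hnd : (p.support).Nodup := hp.support_nodup
  rw [← hsplit, Walk.support_append] at hnd
  by_contra hne
  have : z ∈ (p.dropUntil c h).support.tail := by
    have := (p.dropUntil c h).support_eq_cons
    rw [this] at h2
    rcases List.mem_cons.mp h2 with hh | hh
    · exact absurd hh hne
    · exact hh
  exact (List.disjoint_of_nodup_append hnd) h1 this

set_option linter.unusedSectionVars false

/-- First hit of a set along a path. -/
lemma exists_first_hit {a b : V} (p : G.Walk a b) (hp : p.IsPath) (S : Set V)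
    (hb : b ∈ S) (ha : a ∉ S) :
    ∃ y, y ∈ S ∧ ∃ q : G.Walk a y, q.IsPath ∧ (∀ z ∈ q.support, z ∈ S → z = y) ∧
      (∀ z ∈ q.support, z ∈ p.support) := by
  induction p with
  | nil => exact absurd hb ha
  | @cons a c b h p' ih =>
    by_cases hc : c ∈ S
    · refine ⟨c, hc, Walk.cons h Walk.nil, ?_, ?_, ?_⟩
      · simp [h.ne]
      · intro z hz hzS
        simp only [Walk.support_cons, Walk.support_nil, List.mem_cons, List.mem_singleton] at hz
        rcases hz with rfl | hz
        · exact absurd hzS ha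
        · simpa using hz
      · intro z hz
        simp only [Walk.support_cons, Walk.support_nil, List.mem_cons, List.mem_singleton] at hz
        rcases hz with rfl | hz
        · simp
        · simp at hz; subst hz; simp
    · have hp' : p'.IsPath := hp.of_cons
      obtain ⟨y, hyS, q', hq', hfst, hsub⟩ := ih hp' hb hc
      have hanotin : a ∉ q'.support := fun hin =>
        (Walk.cons_isPath_iff h p').mp hp |>.2 (hsub a hin)
      refine ⟨y, hyS, Walk.cons h q', hq'.cons hanotin, ?_, ?_⟩
      · intro z hz hzS
        rw [Walk.support_cons, List.mem_cons] at hz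
        rcases hz with rfl | hz
        · exact absurd hzS ha
        · exact hfst z hz hzS
      · intro z hz
        rw [Walk.support_cons, List.mem_cons] at hz
        rw [Walk.support_cons, List.mem_cons]
        rcases hz with rfl | hz
        · exact Or.inl rfl
        · exact Or.inr (hsub z hz)

/-- In `G` with `G - w` connected, any two vertices different from `w`
are joined by a path avoiding `w`. -/
lemma exists_path_avoid {w u v : V}
    (h : (G.induce ({w}ᶜ : Set V)).Connected) (hu : u ≠ w) (hv : v ≠ w) :
    ∃ p : G.Walk u v, p.IsPath ∧ w ∉ p.support := by
  have hr := h ⟨u, by simp [hu]⟩ ⟨v, by simp [hv]⟩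
  obtain ⟨q⟩ := hr
  let emb := SimpleGraph.Embedding.induce (G := G) ({w}ᶜ : Set V)
  let p0 : G.Walk u v := q.map emb.toHom
  have hw : w ∉ p0.support := by
    intro hmem
    replace hmem : w ∈ (q.map emb.toHom).support := hmem
    rw [Walk.support_map, List.mem_map] at hmem
    obtain ⟨z, hz, hzw⟩ := hmem
    have hz2 : (z : V) ∈ ({w}ᶜ : Set V) := z.2
    rw [Set.mem_compl_iff, Set.mem_singleton_iff] at hz2
    exact hz2 hzw
  refine ⟨p0.bypass, p0.bypass_isPath, fun hmem => hw (p0.support_bypass_subset hmem)⟩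

/-- Construction in the case where `v` lies on one of the two disjoint `u-w` paths. -/
lemma construct_on_cycle {u v w : V} (huv : u ≠ v) (hvw : v ≠ w) (huw : u ≠ w)
    {P1 P2 : G.Walk u w} (h1 : P1.IsPath) (h2 : P2.IsPath)
    (hdisj : ∀ z, z ∈ P1.support → z ∈ P2.support → z = u ∨ z = w)
    (hv : v ∈ P1.support) :
    ∃ p q : G.Walk u v, p.IsPath ∧ q.IsPath ∧
      (∀ z, z ∈ p.support → z ∈ q.support → z = u ∨ z = v) := by
  have hwA : w ∉ (P1.takeUntil v hv).support := by
    intro hmem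
    exact hvw.symm (end_mem_takeUntil h1 hv hmem)
  refine ⟨P1.takeUntil v hv, (P2.append (P1.dropUntil v hv).reverse), h1.takeUntil hv, ?_, ?_⟩
  · apply append_isPath h2 (h1.dropUntil hv).reverse
    intro z hz1 hz2
    rw [Walk.support_reverse, List.mem_reverse] at hz2
    have hz1' : z ∈ P1.support := P1.support_dropUntil_subset hv hz2
    rcases hdisj z hz1' hz1 with rfl | rfl
    · -- z = u : u in dropUntil means u = v (since u also in takeUntil), contradiction
      exact absurd (mem_takeUntil_mem_dropUntil h1 hv (Walk.start_mem_support _) hz2) huv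
    · rfl
  · intro z hzp hzq
    rw [Walk.mem_support_append_iff] at hzq
    rcases hzq with hzq | hzq
    · have hz1 : z ∈ P1.support := P1.support_takeUntil_subset hv hzp
      rcases hdisj z hz1 hzq with rfl | rfl
      · exact Or.inl rfl
      · exact absurd hzp hwA
    · rw [Walk.support_reverse, List.mem_reverse] at hzq
      exact Or.inr (mem_takeUntil_mem_dropUntil h1 hv hzp hzq)

/-- General construction: `y` first hit on `P1`. -/
lemma construct_general {u v w y : V} (hvw : v ≠ w)
    {P1 P2 : G.Walk u w} (h1 : P1.IsPath) (h2 : P2.IsPath)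
    (hdisj : ∀ z, z ∈ P1.support → z ∈ P2.support → z = u ∨ z = w)
    (hadj : G.Adj w v)
    (hy1 : y ∈ P1.support)
    {Qy : G.Walk v y} (hQy : Qy.IsPath) (hQw : w ∉ Qy.support)
    (hQS : ∀ z ∈ Qy.support, (z ∈ P1.support ∨ z ∈ P2.support) → z = y)
    (hv2 : v ∉ P2.support) :
    ∃ p q : G.Walk u v, p.IsPath ∧ q.IsPath ∧
      (∀ z, z ∈ p.support → z ∈ q.support → z = u ∨ z = v) := by
  have hyw : y ≠ w := fun h => hQw (h ▸ Qy.end_mem_support)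
  have hwA : w ∉ (P1.takeUntil y hy1).support := fun hmem =>
    hyw.symm (end_mem_takeUntil h1 hy1 hmem)
  refine ⟨(P1.takeUntil y hy1).append Qy.reverse, P2.concat hadj, ?_, ?_, ?_⟩
  · apply append_isPath (h1.takeUntil hy1) hQy.reverse
    intro z hz1 hz2
    rw [Walk.support_reverse, List.mem_reverse] at hz2
    exact hQS z hz2 (Or.inl (P1.support_takeUntil_subset hy1 hz1))
  · rw [Walk.concat_eq_append]
    apply append_isPath h2 (by simp [hadj.ne] : (Walk.cons hadj Walk.nil).IsPath)
    intro z hz1 hz2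
    simp only [Walk.support_cons, Walk.support_nil, List.mem_cons, List.mem_singleton] at hz2
    rcases hz2 with rfl | hz2
    · rfl
    · simp at hz2; subst hz2; exact absurd hz1 hv2
  · intro z hzp hzq
    rw [Walk.mem_support_append_iff] at hzp
    rw [Walk.support_concat, List.mem_append, List.mem_singleton] at hzq
    rcases hzq with hzq | rfl
    · rcases hzp with hzp | hzp
      · have hz1 : z ∈ P1.support := P1.support_takeUntil_subset hy1 hzp
        rcases hdisj z hz1 hzq with rfl | rfl
        · exact Or.inl rfl
        · exact absurd hzp hwA
      · rw [Walk.support_reverse, List.mem_reverse] at hzp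
        have := hQS z hzp (Or.inr hzq)
        subst this
        rcases hdisj z hy1 hzq with rfl | rfl
        · exact Or.inl rfl
        · exact absurd rfl hyw
    · exact Or.inr rfl

/-- Two internally disjoint paths between any two distinct vertices of a 2-connected graph;
for adjacent vertices both paths are the edge itself. -/
lemma two_disjoint_paths (hconn : G.Connected)
    (hav : ∀ w : V, (G.induce ({w}ᶜ : Set V)).Connected) :
    ∀ d u v, u ≠ v → G.dist u v = d →
      ∃ p q : G.Walk u v, p.IsPath ∧ q.IsPath ∧
        (∀ z, z ∈ p.support → z ∈ q.support → z = u ∨ z = v) ∧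
        (G.Adj u v → (∀ z ∈ p.support, z = u ∨ z = v) ∧ (∀ z ∈ q.support, z = u ∨ z = v)) := by
  intro d
  induction d using Nat.strong_induction_on with
  | _ d ih =>
    intro u v huv hd
    have hpos : 0 < G.dist u v := hconn.pos_dist_of_ne huv
    match d, hd with
    | 0, hd => omega
    | 1, hd =>
      have hadj : G.Adj u v := SimpleGraph.dist_eq_one_iff_adj.mp hd
      have hsupp : ∀ z ∈ (Walk.cons hadj Walk.nil).support, z = u ∨ z = v := by
        intro z hz
        simp only [Walk.support_cons, Walk.support_nil, List.mem_cons, List.mem_singleton] at hz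
        rcases hz with rfl | hz
        · exact Or.inl rfl
        · simp at hz; exact Or.inr hz
      exact ⟨Walk.cons hadj Walk.nil, Walk.cons hadj Walk.nil, by simp [hadj.ne],
        by simp [hadj.ne], fun z h1 h2 => hsupp z h1, fun _ => ⟨hsupp, hsupp⟩⟩
    | (e+2), hd =>
      set d' := e + 2 with hd'
      have hnadj : ¬ G.Adj u v := by
        intro hadj
        have : G.dist u v = 1 := SimpleGraph.dist_eq_one_iff_adj.mpr hadj
        omega
      -- find w adjacent to v with dist u w = d' - 1
      obtain ⟨p0, hp0⟩ := SimpleGraph.exists_walk_of_dist_ne_zero (by omega : G.dist u v ≠ 0)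
      obtain ⟨w, hadjwv, q0, hq0len⟩ : ∃ w, G.Adj v w ∧ ∃ q0 : G.Walk w u, q0.length = e + 1 := by
        have hrev : p0.reverse.length = e + 2 := by rw [Walk.length_reverse]; omega
        cases hp : p0.reverse with
        | nil => rw [hp] at hrev; simp at hrev
        | cons h q =>
          rw [hp] at hrev
          rw [Walk.length_cons] at hrev
          exact ⟨_, h, q, by omega⟩
      have hdistw : G.dist u w = e + 1 := by
        have h1 : G.dist u w ≤ e + 1 := by
          have := SimpleGraph.dist_le q0.reverse
          rwa [Walk.length_reverse, hq0len] at this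
        have h2 : G.dist u v ≤ G.dist u w + G.dist w v := hconn.dist_triangle
        have h3 : G.dist w v ≤ 1 := by
          have := SimpleGraph.dist_le (Walk.cons hadjwv.symm Walk.nil)
          simpa using this
        omega
      have huw : u ≠ w := by
        intro h; rw [h] at hdistw; simp [SimpleGraph.dist_self] at hdistw
      have hvw : v ≠ w := hadjwv.ne
      obtain ⟨P1, P2, hP1, hP2, hdisj, -⟩ := ih (e+1) (by omega) u w huw hdistw
      -- case: v on P1 or P2
      by_cases hvP : v ∈ P1.support ∨ v ∈ P2.support
      · rcases hvP with hv | hv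
        · obtain ⟨p, q, hp, hq, hpq⟩ := construct_on_cycle huv hvw huw hP1 hP2 hdisj hv
          exact ⟨p, q, hp, hq, hpq, fun hadj => absurd hadj hnadj⟩
        · obtain ⟨p, q, hp, hq, hpq⟩ := construct_on_cycle huv hvw huw hP2 hP1
            (fun z h1 h2 => hdisj z h2 h1) hv
          exact ⟨p, q, hp, hq, hpq, fun hadj => absurd hadj hnadj⟩
      · push_neg at hvP
        obtain ⟨hv1, hv2⟩ := hvP
        -- path from v to u avoiding w
        obtain ⟨Q, hQ, hQw⟩ := exists_path_avoid (hav w) hvw huw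
        have hbS : u ∈ {z | z ∈ P1.support ∨ z ∈ P2.support} := Or.inl P1.start_mem_support
        have haS : v ∉ {z | z ∈ P1.support ∨ z ∈ P2.support} := by
          intro h; rcases h with h | h
          · exact hv1 h
          · exact hv2 h
        obtain ⟨y, hyS, Qy, hQy, hfst, hsub⟩ := exists_first_hit Q hQ _ hbS haS
        have hQyw : w ∉ Qy.support := fun h => hQw (hsub w h)
        rcases hyS with hy1 | hy2
        · obtain ⟨p, q, hp, hq, hpq⟩ := construct_general hvw hP1 hP2 hdisj hadjwv.symm
            hy1 hQy hQyw (fun z hz h => hfst z hz h) hv2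
          exact ⟨p, q, hp, hq, hpq, fun hadj => absurd hadj hnadj⟩
        · obtain ⟨p, q, hp, hq, hpq⟩ := construct_general hvw hP2 hP1
            (fun z h1 h2 => hdisj z h2 h1) hadjwv.symm hy2 hQy hQyw
            (fun z hz h => hfst z hz (Or.symm h)) hv1
          exact ⟨p, q, hp, hq, hpq, fun hadj => absurd hadj hnadj⟩

/-- A connected graph on `n` vertices has at least `n - 1` edges. -/
lemma card_le_edgeFinset_of_connected {W : Type*} [Fintype W] [DecidableEq W]
    (H : SimpleGraph W) [DecidableRel H.Adj] (hc : H.Connected) :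
    Fintype.card W - 1 ≤ H.edgeFinset.card := by
  obtain ⟨r⟩ := hc.nonempty
  have key : ∀ v : W, v ≠ r → ∃ w, H.Adj v w ∧ H.dist w r < H.dist v r := by
    intro v hv
    have hpos : 0 < H.dist v r := hc.pos_dist_of_ne hv
    obtain ⟨p, hp⟩ := SimpleGraph.exists_walk_of_dist_ne_zero (by omega : H.dist v r ≠ 0)
    cases p with
    | nil => exact absurd rfl hv
    | cons h q =>
      refine ⟨_, h, ?_⟩
      have := SimpleGraph.dist_le q
      rw [Walk.length_cons] at hp
      omega
  choose nxt hadj hlt using key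
  set f : W → Sym2 W := fun v => if h : v = r then s(r, r) else s(v, nxt v h) with hf
  have hcard : (univ.erase r).card = Fintype.card W - 1 := by
    rw [card_erase_of_mem (mem_univ r), card_univ]
  rw [← hcard]
  apply Finset.card_le_card_of_injOn f
  · intro v hv
    have hvr : v ≠ r := ne_of_mem_erase hv
    rw [Finset.mem_coe, SimpleGraph.mem_edgeFinset]
    simp only [hf, dif_neg hvr]
    exact (hadj v hvr)
  · intro a ha b hb hab
    have har : a ≠ r := Finset.ne_of_mem_erase (Finset.mem_coe.mp ha)
    have hbr : b ≠ r := Finset.ne_of_mem_erase (Finset.mem_coe.mp hb)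
    simp only [hf, dif_neg har, dif_neg hbr, Sym2.eq, Sym2.rel_iff', Prod.mk.injEq,
      Prod.swap_prod_mk] at hab
    rcases hab with ⟨h1, -⟩ | ⟨h1, h2⟩
    · exact h1
    · exfalso
      have l1 := hlt a har
      have l2 := hlt b hbr
      rw [h2] at l1
      rw [← h1] at l2
      omega

end Aux

/-- If `G` is a `2`-connected graph on `n` vertices, then
`2ξ(G) ≤ (n-2)(n-3)`. -/
theorem xi_two_connected {V : Type*} [Fintype V] [DecidableEq V]
    (G : SimpleGraph V) (hG : IsKConnected 2 G) :
    2 * Forwarding.xi G ≤ (Fintype.card V - 2) * (Fintype.card V - 3) := by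
  classical
  obtain ⟨hn, hs⟩ := hG
  have hconn : G.Connected := by
    have h0 := hs ∅ (by simp)
    rw [Finset.coe_empty, Set.compl_empty] at h0
    exact (SimpleGraph.induceUnivIso G).connected_iff.mp h0
  have hav : ∀ w : V, (G.induce ({w}ᶜ : Set V)).Connected := by
    intro w
    have h0 := hs {w} (by simp)
    rwa [Finset.coe_singleton] at h0
  have key : ∀ u v : V, u ≠ v →
      ∃ p : G.Walk u v, ∃ q : G.Walk u v, p.IsPath ∧ q.IsPath ∧
        (∀ z, z ∈ p.support → z ∈ q.support → z = u ∨ z = v) ∧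
        (G.Adj u v → (∀ z ∈ p.support, z = u ∨ z = v) ∧
          (∀ z ∈ q.support, z = u ∨ z = v)) := by
    intro u v huv
    obtain ⟨p, q, h⟩ := two_disjoint_paths hconn hav (G.dist u v) u v huv rfl
    exact ⟨p, q, h⟩
  choose pw qw hpw hqw hdisj hadjc using key
  let e : V ≃ Fin (Fintype.card V) := Fintype.equivFin V
  let wf : ∀ x y : V, G.Walk x y := fun x y =>
    if h : x = y then h ▸ SimpleGraph.Walk.nil
    else if e x < e y then pw x y h else (qw y x (Ne.symm h)).reverse
  have hwfdef : ∀ x y : V, wf x y = if h : x = y then h ▸ SimpleGraph.Walk.nil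
      else if e x < e y then pw x y h else (qw y x (Ne.symm h)).reverse :=
    fun x y => rfl
  have hwfpath : ∀ x y, (wf x y).IsPath := by
    intro x y
    rw [hwfdef]
    by_cases h : x = y
    · subst h
      rw [dif_pos rfl]
      exact SimpleGraph.Walk.IsPath.nil
    · rw [dif_neg h]
      split_ifs with h2
      · exact hpw x y h
      · exact (hqw y x (Ne.symm h)).reverse
  set R : Forwarding.Routing G := ⟨wf, hwfpath⟩ with hR
  -- basic facts about the routing
  have hwf_eq : ∀ (u v : V) (h : u ≠ v), e u < e v → wf u v = pw u v h := by
    intro u v h h2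
    rw [hwfdef, dif_neg h, if_pos h2]
  have hwf_eq' : ∀ (u v : V) (h : u ≠ v), ¬ (e u < e v) →
      wf u v = (qw v u (Ne.symm h)).reverse := by
    intro u v h h2
    rw [hwfdef, dif_neg h, if_neg h2]
  have fact1 : ∀ u v x : V, u ≠ v → x ≠ u → x ≠ v →
      x ∈ (wf u v).support → ¬ G.Adj u v := by
    intro u v x huv hxu hxv hx hadj
    by_cases h2 : e u < e v
    · rw [hwf_eq u v huv h2] at hx
      rcases (hadjc u v huv hadj).1 x hx with rfl | rfl
      · exact hxu rfl
      · exact hxv rfl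
    · rw [hwf_eq' u v huv h2, SimpleGraph.Walk.support_reverse, List.mem_reverse] at hx
      rcases (hadjc v u (Ne.symm huv) hadj.symm).2 x hx with rfl | rfl
      · exact hxv rfl
      · exact hxu rfl
  have fact2' : ∀ u v x : V, (h : u ≠ v) → e u < e v → x ≠ u → x ≠ v →
      x ∈ (wf u v).support → x ∈ (wf v u).support → False := by
    intro u v x huv hlt hxu hxv hx1 hx2
    rw [hwf_eq u v huv hlt] at hx1
    have hnlt : ¬ (e v < e u) := by
      intro h; exact absurd (h.trans hlt) (lt_irrefl _)
    rw [hwf_eq' v u (Ne.symm huv) hnlt, SimpleGraph.Walk.support_reverse,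
      List.mem_reverse] at hx2
    rcases hdisj u v huv x hx1 hx2 with rfl | rfl
    · exact hxu rfl
    · exact hxv rfl
  have fact2 : ∀ u v x : V, u ≠ v → x ≠ u → x ≠ v →
      x ∈ (wf u v).support → x ∈ (wf v u).support → False := by
    intro u v x huv hxu hxv hx1 hx2
    rcases lt_or_gt_of_ne (fun h : e u = e v => huv (e.injective h)) with hlt | hgt
    · exact fact2' u v x huv hlt hxu hxv hx1 hx2
    · exact fact2' v u x (Ne.symm huv) hgt hxv hxu hx2 hx1
  -- the load bound for each vertex
  have loadbound : ∀ x : V, 2 * Forwarding.vertexLoad R x ≤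
      ((univ.erase x).offDiag.filter fun pr => ¬ G.Adj pr.1 pr.2).card := by
    intro x
    set D := (univ.erase x).offDiag.filter fun pr : V × V => ¬ G.Adj pr.1 pr.2 with hD
    set F := (univ.filter fun p : V × V =>
      p.1 ≠ p.2 ∧ x ∈ (R.walk p.1 p.2).support ∧ x ≠ p.1 ∧ x ≠ p.2) with hF
    have hload : Forwarding.vertexLoad R x = F.card := rfl
    have hmemF : ∀ pr : V × V, pr ∈ F →
        pr.1 ≠ pr.2 ∧ x ∈ (wf pr.1 pr.2).support ∧ x ≠ pr.1 ∧ x ≠ pr.2 := by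
      intro pr hpr
      rw [hF, Finset.mem_filter] at hpr
      exact hpr.2
    have hFD : F ⊆ D := by
      intro pr hpr
      obtain ⟨h1, h2, h3, h4⟩ := hmemF pr hpr
      rw [hD, Finset.mem_filter, Finset.mem_offDiag]
      exact ⟨⟨Finset.mem_erase.mpr ⟨Ne.symm h3, Finset.mem_univ _⟩,
        Finset.mem_erase.mpr ⟨Ne.symm h4, Finset.mem_univ _⟩, h1⟩,
        fact1 pr.1 pr.2 x h1 h3 h4 h2⟩
    have hSD : F.image Prod.swap ⊆ D := by
      intro pr hpr
      rw [Finset.mem_image] at hpr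
      obtain ⟨qr, hqr, rfl⟩ := hpr
      obtain ⟨h1, h2, h3, h4⟩ := hmemF qr hqr
      rw [hD, Finset.mem_filter, Finset.mem_offDiag]
      refine ⟨⟨Finset.mem_erase.mpr ⟨Ne.symm h4, Finset.mem_univ _⟩,
        Finset.mem_erase.mpr ⟨Ne.symm h3, Finset.mem_univ _⟩, Ne.symm h1⟩, ?_⟩
      intro hadj
      exact fact1 qr.1 qr.2 x h1 h3 h4 h2 hadj.symm
    have hdisjF : Disjoint F (F.image Prod.swap) := by
      rw [Finset.disjoint_left]
      intro pr hpr hpr2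
      obtain ⟨h1, h2, h3, h4⟩ := hmemF pr hpr
      rw [Finset.mem_image] at hpr2
      obtain ⟨qr, hqr, hq⟩ := hpr2
      obtain ⟨g1, g2, g3, g4⟩ := hmemF qr hqr
      have hq1 : qr.2 = pr.1 := by rw [← hq]; rfl
      have hq2 : qr.1 = pr.2 := by rw [← hq]; rfl
      rw [hq1, hq2] at g2
      exact fact2 pr.1 pr.2 x h1 h3 h4 h2 g2
    have hcardswap : (F.image Prod.swap).card = F.card :=
      Finset.card_image_of_injective _ Prod.swap_injective
    calc 2 * Forwarding.vertexLoad R x = F.card + (F.image Prod.swap).card := by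
          rw [hload, hcardswap]; ring
      _ = (F ∪ F.image Prod.swap).card := (Finset.card_union_of_disjoint hdisjF).symm
      _ ≤ D.card := Finset.card_le_card (Finset.union_subset hFD hSD)
  -- lower bound on adjacent pairs avoiding x
  have adjbound : ∀ x : V, 2 * (Fintype.card V - 2) ≤
      ((univ.erase x).offDiag.filter fun pr : V × V => G.Adj pr.1 pr.2).card := by
    intro x
    set G' := G.induce ({x}ᶜ : Set V) with hG'
    have hconn' : G'.Connected := hav x
    have hcard' : Fintype.card ({x}ᶜ : Set V) = Fintype.card V - 1 := by
      rw [Fintype.card_compl_set, Set.card_singleton]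
    have hedge : Fintype.card V - 2 ≤ G'.edgeFinset.card := by
      have := card_le_edgeFinset_of_connected G' hconn'
      rw [hcard'] at this
      omega
    have h2m := SimpleGraph.two_mul_card_edgeFinset (G := G')
    have hinj : (univ.filter fun pr : ({x}ᶜ : Set V) × ({x}ᶜ : Set V) =>
        G'.Adj pr.1 pr.2).card ≤
        ((univ.erase x).offDiag.filter fun pr : V × V => G.Adj pr.1 pr.2).card := by
      apply Finset.card_le_card_of_injOn (fun pr => ((pr.1 : V), (pr.2 : V)))
      · intro pr hpr
        rw [Finset.mem_coe, Finset.mem_filter] at hpr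
        have hadj : G.Adj (pr.1 : V) (pr.2 : V) := hpr.2
        rw [Finset.mem_coe, Finset.mem_filter, Finset.mem_offDiag]
        have h1 : (pr.1 : V) ≠ x := by
          have := pr.1.2; rwa [Set.mem_compl_iff, Set.mem_singleton_iff] at this
        have h2 : (pr.2 : V) ≠ x := by
          have := pr.2.2; rwa [Set.mem_compl_iff, Set.mem_singleton_iff] at this
        exact ⟨⟨Finset.mem_erase.mpr ⟨h1, Finset.mem_univ _⟩,
          Finset.mem_erase.mpr ⟨h2, Finset.mem_univ _⟩, hadj.ne⟩, hadj⟩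
      · intro a _ b _ hab
        simp only [Prod.mk.injEq] at hab
        exact Prod.ext (Subtype.ext hab.1) (Subtype.ext hab.2)
    calc 2 * (Fintype.card V - 2) ≤ 2 * G'.edgeFinset.card := by omega
      _ = _ := h2m
      _ ≤ _ := hinj
  -- assemble
  have hxiR : Forwarding.xi G ≤ Forwarding.routingVertexIndex R :=
    Nat.sInf_le ⟨R, rfl⟩
  have hne : (univ : Finset V).Nonempty := by
    rw [← Finset.card_pos, Finset.card_univ]; omega
  obtain ⟨x0, -, hx0⟩ := Finset.exists_mem_eq_sup univ hne (Forwarding.vertexLoad R)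
  have hsup : Forwarding.routingVertexIndex R = Forwarding.vertexLoad R x0 := hx0
  obtain ⟨m, hm⟩ : ∃ m, Fintype.card V = m + 3 := ⟨Fintype.card V - 3, by omega⟩
  have hoff : (univ.erase x0).offDiag.card = (m + 2) * (m + 2) - (m + 2) := by
    rw [Finset.offDiag_card, Finset.card_erase_of_mem (Finset.mem_univ _),
      Finset.card_univ, hm]
    norm_num
  have hsplit := Finset.card_filter_add_card_filter_not
    (s := (univ.erase x0).offDiag) (p := fun pr : V × V => G.Adj pr.1 pr.2)
  have hA := adjbound x0
  have hL := loadbound x0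
  rw [hm] at hA ⊢
  have hgoal : (m + 3 - 2) * (m + 3 - 3) = (m + 1) * m := by congr 1 <;> omega
  rw [hgoal]
  obtain ⟨P, hP⟩ : ∃ P, (m + 1) * m = P := ⟨_, rfl⟩
  obtain ⟨Q, hQ⟩ : ∃ Q, (m + 2) * (m + 2) = Q := ⟨_, rfl⟩
  have hq : Q = P + 2 * (m + 1) + (m + 2) := by
    rw [← hP, ← hQ]; ring
  rw [hQ] at hoff
  rw [hP]
  omega
end

section
/- Let k ≥ 3 and let G be a k-connected simple graph on n vertices with n ≥ 8k − 10. Then ξ(G) ≤ n² − (2k+1)n + 2k. -/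
open Finset

namespace XiProof

open SimpleGraph

set_option linter.unusedSectionVars false
set_option linter.unusedVariables false
set_option maxHeartbeats 1000000

variable {V : Type*} [Fintype V] [DecidableEq V] {G : SimpleGraph V}

/-- Connectivity within a vertex set, phrased with walks of the ambient graph. -/
def ConnOn (G : SimpleGraph V) (S : Set V) : Prop :=
  ∀ ⦃x⦄, x ∈ S → ∀ ⦃y⦄, y ∈ S → ∃ w : G.Walk x y, ∀ z ∈ w.support, z ∈ S

lemma connOn_of_induce {S : Set V} (h : (G.induce S).Connected) : ConnOn G S := by
  intro x hx y hy
  obtain ⟨w⟩ := h.preconnected ⟨x, hx⟩ ⟨y, hy⟩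
  refine ⟨w.map (SimpleGraph.Embedding.induce S).toHom, ?_⟩
  intro z hz
  replace hz : z ∈ (w.map (SimpleGraph.Embedding.induce S).toHom).support := hz
  rw [SimpleGraph.Walk.support_map, List.mem_map] at hz
  obtain ⟨⟨z', hz'⟩, _, rfl⟩ := hz
  exact hz'

lemma connOn_univ {k : ℕ} (hk : 1 ≤ k) (hG : IsKConnected k G) : ConnOn G Set.univ := by
  have h := hG.2 ∅ (by simp; omega)
  rw [Finset.coe_empty, Set.compl_empty] at h
  exact connOn_of_induce h

lemma connOn_compl_singleton {k : ℕ} (hk : 2 ≤ k) (hG : IsKConnected k G) (u : V) :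
    ConnOn G ({u}ᶜ : Set V) := by
  have h := hG.2 {u} (by simp; omega)
  rw [Finset.coe_singleton] at h
  exact connOn_of_induce h

lemma exists_boundary {P : Set V} {p q : V} (w : G.Walk p q) :
    p ∈ P → q ∉ P →
    ∃ a b, G.Adj a b ∧ a ∈ P ∧ b ∉ P ∧ a ∈ w.support ∧ b ∈ w.support := by
  induction w with
  | nil => intro hp hq; exact absurd hp hq
  | @cons u v r h w ih =>
    intro hp hq
    by_cases hv : v ∈ P
    · obtain ⟨a, b, hab, ha, hb, haw, hbw⟩ := ih hv hq
      exact ⟨a, b, hab, ha, hb, by simp [SimpleGraph.Walk.support_cons, haw],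
        by simp [SimpleGraph.Walk.support_cons, hbw]⟩
    · exact ⟨u, v, h, hp, hv, by simp [SimpleGraph.Walk.support_cons],
        by simp [SimpleGraph.Walk.support_cons]⟩

lemma grow_step {k : ℕ} (hk : 3 ≤ k) (hG : IsKConnected k G) (A : Finset V)
    (hA : ConnOn G (↑A : Set V)) (hB : ConnOn G ((↑A : Set V)ᶜ))
    (hAne : A.Nonempty) (hcard : A.card + 2 ≤ Fintype.card V) :
    ∃ u, u ∉ A ∧ ConnOn G (↑(insert u A) : Set V) ∧
      ConnOn G ((↑(insert u A) : Set V)ᶜ) := by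
  classical
  obtain ⟨a0, ha0⟩ := hAne
  have ha0S : a0 ∈ (↑A : Set V) := ha0
  set H : Set V := (↑A : Set V)ᶜ with hH
  set B : Finset V := Aᶜ with hBdef
  have hBcard : 2 ≤ B.card := by
    rw [hBdef, Finset.card_compl]; omega
  obtain ⟨t, ht⟩ : B.Nonempty := Finset.card_pos.mp (by omega)
  have htA : t ∉ A := by rwa [hBdef, Finset.mem_compl] at ht
  have htH : t ∈ H := htA
  have hUconn : ConnOn G Set.univ := connOn_univ (by omega) hG
  -- the set of candidate vertices: complement vertices adjacent to A
  set N' : Finset V := B.filter (fun u => ∃ w ∈ A, G.Adj u w) with hN'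
  have hN'B : ∀ u ∈ N', u ∉ A := by
    intro u hu
    have := (Finset.mem_filter.mp hu).1
    rwa [hBdef, Finset.mem_compl] at this
  have hN'ne : N'.Nonempty := by
    obtain ⟨w, _⟩ := hUconn (Set.mem_univ a0) (Set.mem_univ t)
    obtain ⟨a, b, hab, haP, hbP, _, _⟩ :=
      exists_boundary (P := (↑A : Set V)) w ha0S htA
    refine ⟨b, Finset.mem_filter.mpr ⟨?_, a, haP, hab.symm⟩⟩
    rw [hBdef, Finset.mem_compl]; exact hbP
  -- distance-to-t function within H
  set D : V → Set ℕ := fun y =>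
    {ℓ | ∃ w : G.Walk y t, (∀ z ∈ w.support, z ∈ H) ∧ w.length = ℓ} with hD
  have hDne : ∀ y, y ∈ H → (D y).Nonempty := by
    intro y hy
    obtain ⟨w, hw⟩ := hB hy htH
    exact ⟨w.length, w, hw, rfl⟩
  set f : V → ℕ := fun y => sInf (D y) with hf
  obtain ⟨u, huN, humax⟩ := N'.exists_max_image f hN'ne
  have huB : u ∈ B := (Finset.mem_filter.mp huN).1
  have huA : u ∉ A := hN'B u huN
  have huH : u ∈ H := huA
  obtain ⟨wa, hwaA, hadj_u⟩ := (Finset.mem_filter.mp huN).2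
  -- u ≠ t
  have hut : u ≠ t := by
    intro hEq
    subst hEq
    -- then N' = {u}
    have hft : f u = 0 := by
      have h0 : (0 : ℕ) ∈ D u := ⟨SimpleGraph.Walk.nil, by
        intro z hz
        simp only [SimpleGraph.Walk.support_nil, List.mem_singleton] at hz
        subst hz; exact huH, rfl⟩
      exact Nat.eq_zero_of_le_zero (Nat.sInf_le h0)
    have hNsub : ∀ y ∈ N', y = u := by
      intro y hy
      have hyH : y ∈ H := by
        have := hN'B y hy; exact this
      have hle : f y = 0 := Nat.eq_zero_of_le_zero (hft ▸ humax y hy)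
      obtain ⟨w, _, hlen⟩ := Nat.sInf_mem (hDne y hyH)
      have hlen0 : w.length = 0 := by rw [hlen]; exact hle
      exact SimpleGraph.Walk.eq_of_length_eq_zero hlen0
    -- find y1 ∈ B, y1 ≠ u
    obtain ⟨y1, hy1B, hy1u⟩ : ∃ y1 ∈ B, y1 ≠ u := by
      obtain ⟨c, hc, d, hd, hcd⟩ := Finset.one_lt_card.mp (by omega : 1 < B.card)
      by_cases h : c = u
      · exact ⟨d, hd, by rw [← h]; exact fun hh => hcd hh.symm⟩
      · exact ⟨c, hc, h⟩
    have hy1A : y1 ∉ A := by rwa [hBdef, Finset.mem_compl] at hy1B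
    have hconn1 := connOn_compl_singleton (by omega) hG u
    have hy1m : y1 ∈ ({u}ᶜ : Set V) := by simpa using hy1u
    have ha0m : a0 ∈ ({u}ᶜ : Set V) := by
      simp only [Set.mem_compl_iff, Set.mem_singleton_iff]
      intro hEq; exact huA (hEq ▸ ha0)
    obtain ⟨w, hwsupp⟩ := hconn1 hy1m ha0m
    obtain ⟨a, b, hab, haP, hbP, haw, _⟩ :=
      exists_boundary (P := H) w hy1A (by simpa [hH] using ha0)
    have haB : a ∈ B := by rw [hBdef, Finset.mem_compl]; exact haP
    have haN : a ∈ N' := Finset.mem_filter.mpr ⟨haB, b, by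
      simpa [hH, Set.mem_compl_iff] using hbP, hab⟩
    have : a = u := hNsub a haN
    have := hwsupp a haw
    simp only [Set.mem_compl_iff, Set.mem_singleton_iff] at this
    exact this ‹a = u›
  -- the new complement
  set K : Set V := H \ {u} with hK
  have htK : t ∈ K := ⟨htH, by simpa using (Ne.symm hut)⟩
  -- every vertex of K reaches t within K
  have hclaim : ∀ y ∈ K, ∃ w : G.Walk y t, ∀ z ∈ w.support, z ∈ K := by
    by_contra hcon
    push_neg at hcon
    obtain ⟨y0, hy0K, hy0⟩ := hcon
    set Y : Set V := {y | y ∈ K ∧ ¬∃ w : G.Walk y t, ∀ z ∈ w.support, z ∈ K}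
      with hY
    have hy0Y : y0 ∈ Y := ⟨hy0K, by
      rintro ⟨w, hw⟩
      obtain ⟨z, hz, hzK⟩ := hy0 w
      exact hzK (hw z hz)⟩
    -- no vertex of Y is adjacent to A
    have hYnA : ∀ y ∈ Y, ∀ av ∈ A, ¬G.Adj y av := by
      rintro y ⟨hyK, hyno⟩ av havA hadj
      have hyH : y ∈ H := hyK.1
      have hyu : y ≠ u := by simpa using hyK.2
      have hyB : y ∈ B := by rw [hBdef, Finset.mem_compl]; exact hyH
      have hyN : y ∈ N' := Finset.mem_filter.mpr ⟨hyB, av, havA, hadj⟩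
      have hfy : f y ≤ f u := humax y hyN
      obtain ⟨w, hsupp, hlen⟩ := Nat.sInf_mem (hDne y hyH)
      have huw : u ∈ w.support := by
        by_contra hnu
        exact hyno ⟨w, fun z hz => ⟨hsupp z hz, by
          simp only [Set.mem_singleton_iff]
          intro hEq; exact hnu (hEq ▸ hz)⟩⟩
      have hspec := SimpleGraph.Walk.take_spec w huw
      have hlen12 : (w.takeUntil u huw).length + (w.dropUntil u huw).length
          = w.length := by
        rw [← SimpleGraph.Walk.length_append, hspec]
      have hw2D : (w.dropUntil u huw).length ∈ D u := by
        refine ⟨w.dropUntil u huw, fun z hz => hsupp z ?_, rfl⟩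
        exact SimpleGraph.Walk.support_dropUntil_subset w huw hz
      have h2 : f u ≤ (w.dropUntil u huw).length := Nat.sInf_le hw2D
      have h1 : 1 ≤ (w.takeUntil u huw).length := by
        rcases Nat.eq_zero_or_pos (w.takeUntil u huw).length with h0 | h0
        · exact absurd (SimpleGraph.Walk.eq_of_length_eq_zero h0) hyu
        · exact h0
      have hfyw : f y = w.length := hlen.symm
      omega
    -- boundary contradiction
    have hconn1 := connOn_compl_singleton (by omega) hG u
    have hy0u : y0 ≠ u := by simpa using hy0K.2
    have ha0u : a0 ≠ u := fun hEq => huA (hEq ▸ ha0)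
    obtain ⟨w, hwsupp⟩ := hconn1 (by simpa using hy0u) (by simpa using ha0u)
    have ha0Y : a0 ∉ Y := by
      rintro ⟨haK, -⟩
      exact haK.1 ha0
    obtain ⟨a, b, hab, haY, hbY, haw, hbw⟩ :=
      exists_boundary (P := Y) w hy0Y ha0Y
    have hbu : b ≠ u := by
      have := hwsupp b hbw
      simpa using this
    by_cases hbA : b ∈ A
    · exact hYnA a haY b hbA hab
    · have hbK : b ∈ K := ⟨hbA, by simpa using hbu⟩
      have hbreach : ∃ w : G.Walk b t, ∀ z ∈ w.support, z ∈ K := by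
        by_contra hno
        exact hbY ⟨hbK, hno⟩
      obtain ⟨wb, hwb⟩ := hbreach
      refine haY.2 ⟨SimpleGraph.Walk.cons hab wb, ?_⟩
      intro z hz
      rw [SimpleGraph.Walk.support_cons, List.mem_cons] at hz
      rcases hz with rfl | hz
      · exact haY.1
      · exact hwb z hz
  -- conclude
  refine ⟨u, huA, ?_, ?_⟩
  · -- ConnOn insert
    rw [Finset.coe_insert]
    have hreach : ∀ x ∈ (insert u (↑A : Set V)), ∃ w : G.Walk x u,
        ∀ z ∈ w.support, z ∈ insert u (↑A : Set V) := by
      intro x hx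
      rcases Set.mem_insert_iff.mp hx with rfl | hxA
      · exact ⟨SimpleGraph.Walk.nil, by
          intro z hz
          simp only [SimpleGraph.Walk.support_nil, List.mem_singleton] at hz
          subst hz; exact Set.mem_insert _ _⟩
      · obtain ⟨w, hw⟩ := hA hxA hwaA
        refine ⟨w.append (SimpleGraph.Walk.cons hadj_u.symm SimpleGraph.Walk.nil), ?_⟩
        intro z hz
        rw [SimpleGraph.Walk.mem_support_append_iff] at hz
        rcases hz with hz | hz
        · exact Set.mem_insert_of_mem _ (hw z hz)
        · rw [SimpleGraph.Walk.support_cons, List.mem_cons] at hz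
          rcases hz with rfl | hz
          · exact Set.mem_insert_of_mem _ (hw _ (SimpleGraph.Walk.end_mem_support w))
          · simp only [SimpleGraph.Walk.support_nil, List.mem_singleton] at hz
            subst hz; exact Set.mem_insert _ _
    intro x hx y hy
    obtain ⟨wx, hwx⟩ := hreach x hx
    obtain ⟨wy, hwy⟩ := hreach y hy
    refine ⟨wx.append wy.reverse, ?_⟩
    intro z hz
    rw [SimpleGraph.Walk.mem_support_append_iff] at hz
    rcases hz with hz | hz
    · exact hwx z hz
    · rw [SimpleGraph.Walk.support_reverse, List.mem_reverse] at hz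
      exact hwy z hz
  · -- ConnOn complement
    have hKeq : ((↑(insert u A) : Set V))ᶜ = K := by
      ext z
      simp only [hK, hH, Finset.coe_insert, Set.mem_compl_iff, Set.mem_insert_iff,
        Set.mem_diff, Set.mem_singleton_iff, Finset.mem_coe, not_or]
      tauto
    rw [hKeq]
    intro x hx y hy
    obtain ⟨wx, hwx⟩ := hclaim x hx
    obtain ⟨wy, hwy⟩ := hclaim y hy
    refine ⟨wx.append wy.reverse, ?_⟩
    intro z hz
    rw [SimpleGraph.Walk.mem_support_append_iff] at hz
    rcases hz with hz | hz
    · exact hwx z hz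
    · rw [SimpleGraph.Walk.support_reverse, List.mem_reverse] at hz
      exact hwy z hz


lemma connOn_singleton (G : SimpleGraph V) (v : V) : ConnOn G ({v} : Set V) := by
  intro x hx y hy
  simp only [Set.mem_singleton_iff] at hx hy
  subst hx; subst hy
  exact ⟨SimpleGraph.Walk.nil, by
    intro z hz
    simp only [SimpleGraph.Walk.support_nil, List.mem_singleton] at hz
    simp [hz]⟩

lemma growth {k : ℕ} (hk : 3 ≤ k) (hG : IsKConnected k G) :
    ∀ a : ℕ, 1 ≤ a → a ≤ Fintype.card V - Fintype.card V / 2 →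
    ∃ A : Finset V, A.card = a ∧ ConnOn G (↑A : Set V) ∧
      ConnOn G ((↑A : Set V)ᶜ) := by
  intro a
  induction a with
  | zero => omega
  | succ m ih =>
    intro _ h2
    rcases Nat.eq_zero_or_pos m with hm | hm
    · -- base case: a singleton
      subst hm
      have : 0 < Fintype.card V := by have := hG.1; omega
      obtain ⟨v⟩ := Fintype.card_pos_iff.mp this
      refine ⟨{v}, by simp, ?_, ?_⟩
      · rw [Finset.coe_singleton]; exact connOn_singleton G v
      · have h := hG.2 {v} (by simp; omega)
        rw [Finset.coe_singleton] at h ⊢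
        exact connOn_of_induce h
    · obtain ⟨A, hAcard, hA, hB⟩ := ih hm (by omega)
      have hcard2 : A.card + 2 ≤ Fintype.card V := by
        have := hG.1
        omega
      obtain ⟨u, huA, hA', hB'⟩ := grow_step hk hG A hA hB
        (Finset.card_pos.mp (by omega)) hcard2
      exact ⟨insert u A, by rw [Finset.card_insert_of_notMem huA, hAcard], hA', hB'⟩

open scoped Classical in
noncomputable def myWalk (hU : ConnOn G Set.univ) (A : Finset V)
    (hA : ConnOn G (↑A : Set V)) (hB : ConnOn G ((↑A : Set V)ᶜ)) (x y : V) :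
    G.Walk x y :=
  if h : G.Adj x y then SimpleGraph.Walk.cons h SimpleGraph.Walk.nil
  else if hxy : x = y then SimpleGraph.Walk.nil.copy rfl hxy
  else if hAm : x ∈ A ∧ y ∈ A then
    (hA (Finset.mem_coe.mpr hAm.1) (Finset.mem_coe.mpr hAm.2)).choose
  else if hBm : x ∉ A ∧ y ∉ A then
    (hB (by simp [hBm.1]) (by simp [hBm.2])).choose
  else (hU (Set.mem_univ x) (Set.mem_univ y)).choose

lemma myWalk_support_adj (hU : ConnOn G Set.univ) (A : Finset V)
    (hA : ConnOn G (↑A : Set V)) (hB : ConnOn G ((↑A : Set V)ᶜ))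
    {x y : V} (h : G.Adj x y) :
    ∀ z ∈ (myWalk hU A hA hB x y).support, z = x ∨ z = y := by
  intro z hz
  unfold myWalk at hz
  rw [dif_pos h] at hz
  simpa [SimpleGraph.Walk.support_cons] using hz

lemma myWalk_support_inA (hU : ConnOn G Set.univ) (A : Finset V)
    (hA : ConnOn G (↑A : Set V)) (hB : ConnOn G ((↑A : Set V)ᶜ))
    {x y : V} (hx : x ∈ A) (hy : y ∈ A) :
    ∀ z ∈ (myWalk hU A hA hB x y).support, z ∈ A := by
  intro z hz
  unfold myWalk at hz
  split_ifs at hz with h1 h2 h3 h4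
  · rcases (by simpa [SimpleGraph.Walk.support_cons] using hz : z = x ∨ z = y) with
      rfl | rfl <;> assumption
  · subst h2
    simp only [SimpleGraph.Walk.support_copy, SimpleGraph.Walk.support_nil,
      List.mem_singleton] at hz
    subst hz; assumption
  · exact Finset.mem_coe.mp
      ((hA (Finset.mem_coe.mpr h3.1) (Finset.mem_coe.mpr h3.2)).choose_spec z hz)
  · exact absurd ⟨hx, hy⟩ h3
  · exact absurd ⟨hx, hy⟩ h3

lemma myWalk_support_notinA (hU : ConnOn G Set.univ) (A : Finset V)
    (hA : ConnOn G (↑A : Set V)) (hB : ConnOn G ((↑A : Set V)ᶜ))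
    {x y : V} (hx : x ∉ A) (hy : y ∉ A) :
    ∀ z ∈ (myWalk hU A hA hB x y).support, z ∉ A := by
  intro z hz
  unfold myWalk at hz
  split_ifs at hz with h1 h2 h3 h4
  · rcases (by simpa [SimpleGraph.Walk.support_cons] using hz : z = x ∨ z = y) with
      rfl | rfl <;> assumption
  · subst h2
    simp only [SimpleGraph.Walk.support_copy, SimpleGraph.Walk.support_nil,
      List.mem_singleton] at hz
    subst hz; assumption
  · exact absurd h3.1 hx
  · have := (hB (by simp [h4.1] : x ∈ ((↑A : Set V)ᶜ))
      (by simp [h4.2] : y ∈ ((↑A : Set V)ᶜ))).choose_spec z hz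
    simpa using this
  · exact absurd ⟨hx, hy⟩ h4

noncomputable def myRouting (hU : ConnOn G Set.univ) (A : Finset V)
    (hA : ConnOn G (↑A : Set V)) (hB : ConnOn G ((↑A : Set V)ᶜ)) :
    Forwarding.Routing G where
  walk x y := (myWalk hU A hA hB x y).bypass
  isPath x y := SimpleGraph.Walk.bypass_isPath _


variable [DecidableRel G.Adj] in
lemma load_le (R : Forwarding.Routing G) (k : ℕ) (hdeg : ∀ v, k ≤ G.degree v)
    (C : Finset V) (x : V) (hx : x ∉ C)
    (hC : ∀ u v, u ∈ C → v ∈ C → ∀ z ∈ (R.walk u v).support, z ∈ C)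
    (hadj : ∀ u v, G.Adj u v → ∀ z ∈ (R.walk u v).support, z = u ∨ z = v) :
    Forwarding.vertexLoad R x + (C.card * C.card - C.card)
      + (Cᶜ.card - 1) * (k - 1)
      ≤ (Fintype.card V - 1) * (Fintype.card V - 1) - (Fintype.card V - 1) := by
  classical
  set n := Fintype.card V with hn
  set T : Finset (V × V) := (univ.erase x).offDiag with hT
  set S1 : Finset (V × V) := C.offDiag with hS1
  set S2 : Finset (V × V) :=
    (Cᶜ.erase x).biUnion (fun u => {u} ×ˢ ((G.neighborFinset u).erase x)) with hS2
  have hS2mem : ∀ p ∈ S2, p.1 ∈ Cᶜ.erase x ∧ p.2 ∈ (G.neighborFinset p.1).erase x := by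
    intro p hp
    rw [hS2, Finset.mem_biUnion] at hp
    obtain ⟨u, hu, hp⟩ := hp
    rw [Finset.mem_product, Finset.mem_singleton] at hp
    obtain ⟨h1, h2⟩ := hp
    rw [h1]
    exact ⟨hu, h2⟩
  have hS1T : S1 ⊆ T := by
    intro p hp
    rw [hS1, Finset.mem_offDiag] at hp
    rw [hT, Finset.mem_offDiag]
    refine ⟨Finset.mem_erase.mpr ⟨?_, Finset.mem_univ _⟩,
      Finset.mem_erase.mpr ⟨?_, Finset.mem_univ _⟩, hp.2.2⟩
    · intro hEq; exact hx (hEq ▸ hp.1)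
    · intro hEq; exact hx (hEq ▸ hp.2.1)
  have hS2T : S2 ⊆ T := by
    intro p hp
    obtain ⟨h1, h2⟩ := hS2mem p hp
    rw [Finset.mem_erase] at h1 h2
    rw [hT, Finset.mem_offDiag]
    refine ⟨Finset.mem_erase.mpr ⟨h1.1, Finset.mem_univ _⟩,
      Finset.mem_erase.mpr ⟨h2.1, Finset.mem_univ _⟩, ?_⟩
    have hadj' : G.Adj p.1 p.2 := by
      have := h2.2; rwa [SimpleGraph.mem_neighborFinset] at this
    exact fun hEq => G.irrefl (hEq ▸ hadj')
  have hdisj : Disjoint S1 S2 := by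
    rw [Finset.disjoint_left]
    intro p hp1 hp2
    have h1 := (Finset.mem_offDiag.mp (hS1 ▸ hp1)).1
    have h2 := (hS2mem p hp2).1
    rw [Finset.mem_erase, Finset.mem_compl] at h2
    exact h2.2 h1
  have hloadsub : (univ.filter fun p : V × V =>
      p.1 ≠ p.2 ∧ x ∈ (R.walk p.1 p.2).support ∧ x ≠ p.1 ∧ x ≠ p.2)
      ⊆ T \ (S1 ∪ S2) := by
    intro p hp
    simp only [Finset.mem_filter, Finset.mem_univ, true_and] at hp
    obtain ⟨hne, hsup, hx1, hx2⟩ := hp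
    rw [Finset.mem_sdiff]
    constructor
    · rw [hT, Finset.mem_offDiag]
      exact ⟨Finset.mem_erase.mpr ⟨Ne.symm hx1, Finset.mem_univ _⟩,
        Finset.mem_erase.mpr ⟨Ne.symm hx2, Finset.mem_univ _⟩, hne⟩
    · rw [Finset.mem_union]
      rintro (h | h)
      · rw [hS1, Finset.mem_offDiag] at h
        exact hx (hC p.1 p.2 h.1 h.2.1 x hsup)
      · obtain ⟨h1, h2⟩ := hS2mem p h
        have hadj' : G.Adj p.1 p.2 := by
          have := (Finset.mem_erase.mp h2).2
          rwa [SimpleGraph.mem_neighborFinset] at this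
        rcases hadj p.1 p.2 hadj' x hsup with hEq | hEq
        · exact hx1 hEq
        · exact hx2 hEq
  have hUT : S1 ∪ S2 ⊆ T := Finset.union_subset hS1T hS2T
  have hload : Forwarding.vertexLoad R x ≤ T.card - (S1 ∪ S2).card := by
    rw [← Finset.card_sdiff_of_subset hUT]
    unfold Forwarding.vertexLoad
    exact Finset.card_le_card (by
      intro p hp
      apply hloadsub
      simpa using hp)
  have hTcard : T.card = (n - 1) * (n - 1) - (n - 1) := by
    rw [hT, Finset.offDiag_card, Finset.card_erase_of_mem (Finset.mem_univ x),
      Finset.card_univ]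
  have hS1card : S1.card = C.card * C.card - C.card := by
    rw [hS1, Finset.offDiag_card]
  have hS2card : (Cᶜ.card - 1) * (k - 1) ≤ S2.card := by
    rw [hS2, Finset.card_biUnion]
    · have hone : ∀ u ∈ Cᶜ.erase x, k - 1 ≤ ({u} ×ˢ ((G.neighborFinset u).erase x)).card := by
        intro u _
        rw [Finset.card_product, Finset.card_singleton, one_mul]
        have hdu : k ≤ (G.neighborFinset u).card := by
          rw [G.card_neighborFinset_eq_degree]; exact hdeg u
        by_cases hmem : x ∈ G.neighborFinset u
        · rw [Finset.card_erase_of_mem hmem]; omega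
        · rw [Finset.erase_eq_of_notMem hmem]; omega
      calc (Cᶜ.card - 1) * (k - 1)
          = (Cᶜ.erase x).card * (k - 1) := by
            rw [Finset.card_erase_of_mem (Finset.mem_compl.mpr hx)]
        _ = ∑ _u ∈ Cᶜ.erase x, (k - 1) := by rw [Finset.sum_const, smul_eq_mul]
        _ ≤ ∑ u ∈ Cᶜ.erase x, ({u} ×ˢ ((G.neighborFinset u).erase x)).card :=
            Finset.sum_le_sum hone
    · intro u hu v hv huv
      simp only [Finset.disjoint_left]
      intro p hp hq
      rw [Finset.mem_product, Finset.mem_singleton] at hp hq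
      exact huv (hp.1 ▸ hq.1 ▸ rfl)
  have hUcard : (S1 ∪ S2).card = S1.card + S2.card :=
    Finset.card_union_of_disjoint hdisj
  have hUle : (S1 ∪ S2).card ≤ T.card := Finset.card_le_card hUT
  -- combine
  set L := Forwarding.vertexLoad R x with hL
  set c2 := C.card * C.card - C.card with hc2
  set q := (Cᶜ.card - 1) * (k - 1) with hq
  set tc := (n - 1) * (n - 1) - (n - 1) with htc
  omega


variable [DecidableRel G.Adj] in
lemma k_le_degree {k : ℕ} (hG : IsKConnected k G) (v : V) : k ≤ G.degree v := by
  by_contra hlt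
  push_neg at hlt
  have hc := connOn_of_induce
    (hG.2 (G.neighborFinset v) (by rwa [G.card_neighborFinset_eq_degree]))
  obtain ⟨u, hu⟩ : ∃ u, u ∉ insert v (G.neighborFinset v) := by
    by_contra hall
    push_neg at hall
    have hsub : (univ : Finset V) ⊆ insert v (G.neighborFinset v) := fun z _ => hall z
    have hcard := Finset.card_le_card hsub
    have h2 := Finset.card_insert_le v (G.neighborFinset v)
    rw [Finset.card_univ] at hcard
    rw [G.card_neighborFinset_eq_degree] at h2
    have := hG.1
    omega
  rw [Finset.mem_insert, not_or] at hu
  have hvmem : v ∈ ((↑(G.neighborFinset v) : Set V))ᶜ := by simp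
  have humem : u ∈ ((↑(G.neighborFinset v) : Set V))ᶜ := by simpa using hu.2
  obtain ⟨w, hw⟩ := hc hvmem humem
  cases w with
  | nil => exact hu.1 rfl
  | @cons _ z _ h rest =>
    have hz : z ∈ ((↑(G.neighborFinset v) : Set V))ᶜ :=
      hw z (by simp [SimpleGraph.Walk.support_cons])
    simp only [Set.mem_compl_iff, Finset.coe_sort_coe, Finset.mem_coe,
      SimpleGraph.mem_neighborFinset] at hz
    exact hz h

lemma arith (n k c d : ℕ) (hkn : 8 * k ≤ n + 10) (hk : 3 ≤ k)
    (hcd : c + d = n) (h2c : n ≤ 2 * c + 1) (hc7 : 7 ≤ c) (hd1 : 1 ≤ d) :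
    2 * (k - 1) * (n - 1) ≤ (c * c - c) + (d - 1) * (k - 1) := by
  have h3 : 3 * (k - 1) ≤ c - 1 := by omega
  have key : (k - 1) * (n + c - 1) ≤ c * c - c := by
    calc (k - 1) * (n + c - 1) ≤ (k - 1) * (3 * c) :=
          Nat.mul_le_mul_left _ (by omega)
      _ = (3 * (k - 1)) * c := by ring
      _ ≤ (c - 1) * c := Nat.mul_le_mul_right _ h3
      _ = c * c - c := by
          rw [Nat.sub_one_mul]
  calc 2 * (k - 1) * (n - 1)
      = (k - 1) * (n + c - 1) + (k - 1) * (d - 1) := by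
        have h1 : (n + c - 1) + (d - 1) = 2 * (n - 1) := by omega
        calc 2 * (k - 1) * (n - 1) = (k - 1) * (2 * (n - 1)) := by ring
          _ = (k - 1) * ((n + c - 1) + (d - 1)) := by rw [h1]
          _ = (k - 1) * (n + c - 1) + (k - 1) * (d - 1) := Nat.mul_add _ _ _
    _ ≤ (c * c - c) + (d - 1) * (k - 1) :=
        Nat.add_le_add key (le_of_eq (Nat.mul_comm _ _))

end XiProof

/-- If `k ≥ 3` and `G` is a `k`-connected graph on
`n ≥ 8k - 10` vertices, then `ξ(G) ≤ n² - (2k+1)n + 2k`. -/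
theorem xi_k_connected {V : Type*} [Fintype V] [DecidableEq V]
    (G : SimpleGraph V) (k : ℕ) (hk : 3 ≤ k) (hG : IsKConnected k G)
    (hn : 8 * k - 10 ≤ Fintype.card V) :
    (Forwarding.xi G : ℤ) ≤ (Fintype.card V : ℤ) ^ 2 -
      (2 * (k : ℤ) + 1) * (Fintype.card V : ℤ) + 2 * (k : ℤ) := by
  classical
  letI : DecidableRel G.Adj := Classical.decRel _
  set n := Fintype.card V with hn
  have hkn : 8 * k ≤ n + 10 := by omega
  have hn14 : 14 ≤ n := by omega
  have hUconn : XiProof.ConnOn G Set.univ := XiProof.connOn_univ (by omega) hG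
  obtain ⟨A, hAcard, hA, hB⟩ := XiProof.growth hk hG (n - n / 2)
    (by omega) (le_refl _)
  set R := XiProof.myRouting hUconn A hA hB with hR
  have hdeg : ∀ v, k ≤ G.degree v := fun v => XiProof.k_le_degree hG v
  have hBcard : Aᶜ.card = n / 2 := by
    rw [Finset.card_compl, hAcard]; omega
  have hwalkA : ∀ u v, u ∈ A → v ∈ A → ∀ z ∈ (R.walk u v).support, z ∈ A := by
    intro u v hu hv z hz
    exact XiProof.myWalk_support_inA hUconn A hA hB hu hv z
      (SimpleGraph.Walk.support_bypass_subset _ hz)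
  have hwalkB : ∀ u v, u ∈ Aᶜ → v ∈ Aᶜ → ∀ z ∈ (R.walk u v).support, z ∈ Aᶜ := by
    intro u v hu hv z hz
    rw [Finset.mem_compl] at hu hv ⊢
    exact XiProof.myWalk_support_notinA hUconn A hA hB hu hv z
      (SimpleGraph.Walk.support_bypass_subset _ hz)
  have hadjR : ∀ u v, G.Adj u v → ∀ z ∈ (R.walk u v).support, z = u ∨ z = v := by
    intro u v huv z hz
    exact XiProof.myWalk_support_adj hUconn A hA hB huv z
      (SimpleGraph.Walk.support_bypass_subset _ hz)
  have e1 : (n - 1) ≤ (n - 1) * (n - 1) := Nat.le_mul_of_pos_left _ (by omega)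
  have e2 : 2 * (k - 1) * (n - 1) ≤ (n - 1) * (n - 1) - (n - 1) := by
    have h1 : (n - 1) * (n - 1) - (n - 1) = (n - 2) * (n - 1) := by
      rw [show (n - 2) = (n - 1) - 1 by omega]
      exact (Nat.sub_one_mul _ _).symm
    rw [h1]
    have h2 : 2 * (k - 1) ≤ n - 2 := by omega
    exact Nat.mul_le_mul_right _ h2
  set tgt : ℕ := (n - 1) * (n - 1) - (n - 1) - 2 * (k - 1) * (n - 1) with htgt
  have hloadall : ∀ x, Forwarding.vertexLoad R x ≤ tgt := by
    intro x
    by_cases hxA : x ∈ A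
    · have hld := XiProof.load_le R k hdeg Aᶜ x (by simpa using hxA) hwalkB hadjR
      rw [compl_compl] at hld
      have har := XiProof.arith n k (Aᶜ.card) (A.card) hkn hk
        (by omega) (by omega) (by omega) (by omega)
      rw [htgt]
      set L := Forwarding.vertexLoad R x
      set P1 := Aᶜ.card * Aᶜ.card - Aᶜ.card
      set P2 := (A.card - 1) * (k - 1)
      set X := (n - 1) * (n - 1) - (n - 1)
      set Y := 2 * (k - 1) * (n - 1)
      omega
    · have hld := XiProof.load_le R k hdeg A x hxA hwalkA hadjR
      have har := XiProof.arith n k (A.card) (Aᶜ.card) hkn hk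
        (by omega) (by omega) (by omega) (by omega)
      rw [htgt]
      set L := Forwarding.vertexLoad R x
      set P1 := A.card * A.card - A.card
      set P2 := (Aᶜ.card - 1) * (k - 1)
      set X := (n - 1) * (n - 1) - (n - 1)
      set Y := 2 * (k - 1) * (n - 1)
      omega
  have hidx : Forwarding.routingVertexIndex R ≤ tgt := by
    unfold Forwarding.routingVertexIndex
    exact Finset.sup_le (fun x _ => hloadall x)
  have hxi : Forwarding.xi G ≤ tgt :=
    le_trans (Nat.sInf_le ⟨R, rfl⟩) hidx
  have hcast : ((tgt : ℕ) : ℤ) = ((n : ℤ) - 1) * ((n : ℤ) - 1) - ((n : ℤ) - 1)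
      - 2 * ((k : ℤ) - 1) * ((n : ℤ) - 1) := by
    rw [htgt, Nat.cast_sub e2, Nat.cast_sub e1, Nat.cast_mul, Nat.cast_mul,
      Nat.cast_mul, Nat.cast_sub (by omega : 1 ≤ n), Nat.cast_sub (by omega : 1 ≤ k)]
    push_cast
    ring
  have hfinal : ((tgt : ℕ) : ℤ) = (n : ℤ) ^ 2 - (2 * (k : ℤ) + 1) * (n : ℤ)
      + 2 * (k : ℤ) := by
    rw [hcast]; ring
  calc (Forwarding.xi G : ℤ) ≤ ((tgt : ℕ) : ℤ) := by exact_mod_cast hxi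
    _ = _ := hfinal
end

section
/- For every connected simple graph G on n vertices with maximum degree Δ ≥ 1, one has ξ(G) ≤ (n−1)(n−2) − (2n − 2 − Δ·⌊1 + (n−1)/Δ⌋)·⌊(n−1)/Δ⌋ (as an inequality of integers). -/
open Finset

/-! ### Auxiliary material for the proof

The proof goes through a spanning tree `T ≤ G`.  Routing along the unique
tree paths, a path through `x` as an internal vertex must enter and leave
`x` through two *distinct* neighbours of `x` (its "branches"), so the load
of `x` is at most the number of ordered pairs of vertices lying in distinct
branches.  Since `x` has at most `Δ` branches, a convexity estimate on the
branch sizes yields the bound. -/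

section SpanningTree

open SimpleGraph

variable {V : Type*}

private lemma reachable_of_walk_delete {G : SimpleGraph V} {v w : V}
    (hr : (G \ fromEdgeSet {s(v, w)}).Reachable v w) :
    ∀ {a b : V}, G.Walk a b → (G \ fromEdgeSet {s(v, w)}).Reachable a b := by
  intro a b p
  induction p with
  | nil => exact Reachable.refl _
  | @cons a c b h q ih =>
    refine Reachable.trans ?_ ih
    by_cases hvw : s(a, c) = s(v, w)
    · rw [Sym2.eq_iff] at hvw
      rcases hvw with ⟨rfl, rfl⟩ | ⟨rfl, rfl⟩
      · exact hr
      · exact hr.symm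
    · refine Adj.reachable ?_
      rw [sdiff_adj]
      refine ⟨h, fun hc => ?_⟩
      rw [fromEdgeSet_adj] at hc
      exact hvw (by simpa using hc.1)

/-- Every connected graph on a finite vertex type has a spanning tree. -/
private lemma exists_spanning_tree' [Fintype V] :
    ∀ (n : ℕ) (G : SimpleGraph V), G.edgeSet.ncard = n → G.Connected →
      ∃ T, T ≤ G ∧ T.IsTree := by
  intro n
  induction n using Nat.strong_induction_on with
  | _ n ih =>
    intro G hn hG
    by_cases ha : G.IsAcyclic
    · exact ⟨G, le_rfl, ⟨hG, ha⟩⟩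
    · rw [isAcyclic_iff_forall_adj_isBridge] at ha
      push_neg at ha
      obtain ⟨v, w, hadj, hnb⟩ := ha
      have hreach : (G \ fromEdgeSet {s(v, w)}).Reachable v w := by
        by_contra hc
        exact hnb (isBridge_iff.mpr hc)
      have hconn' : (G \ fromEdgeSet {s(v, w)}).Connected := by
        haveI : Nonempty V := hG.nonempty
        exact ⟨fun a b => reachable_of_walk_delete hreach ((hG.preconnected a b).some)⟩
      have hE : (G \ fromEdgeSet {s(v, w)}).edgeSet = G.edgeSet \ {s(v, w)} := by
        rw [edgeSet_sdiff, edgeSet_fromEdgeSet, edgeSet_sdiff_sdiff_isDiag]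
      have hlt : (G \ fromEdgeSet {s(v, w)}).edgeSet.ncard < n := by
        rw [hE, ← hn]
        exact Set.ncard_diff_singleton_lt_of_mem hadj G.edgeSet.toFinite
      obtain ⟨T, hT1, hT2⟩ := ih _ hlt _ rfl hconn'
      exact ⟨T, hT1.trans sdiff_le, hT2⟩

/-- The unique path between two vertices of a tree. -/
noncomputable def treePath {T : SimpleGraph V} (hT : T.IsTree) (u v : V) : T.Walk u v :=
  (hT.existsUnique_path u v).choose

lemma treePath_isPath {T : SimpleGraph V} (hT : T.IsTree) (u v : V) :
    (treePath hT u v).IsPath := (hT.existsUnique_path u v).choose_spec.1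

lemma treePath_unique {T : SimpleGraph V} (hT : T.IsTree) {u v : V} (p : T.Walk u v)
    (hp : p.IsPath) : p = treePath hT u v := (hT.existsUnique_path u v).choose_spec.2 p hp

/-- The first vertex (after `x`) on the tree path from `x` to `u`. -/
noncomputable def branch {T : SimpleGraph V} (hT : T.IsTree) (x u : V) : V :=
  (treePath hT x u).getVert 1

lemma branch_adj {T : SimpleGraph V} (hT : T.IsTree) {x u : V} (h : x ≠ u) :
    T.Adj x (branch hT x u) :=
  Walk.adj_snd (Walk.not_nil_of_ne h)

lemma getVert_one_mem_support_tail {T : SimpleGraph V} {x v : V} (q : T.Walk x v)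
    (h : x ≠ v) : q.getVert 1 ∈ q.support.tail := by
  cases q with
  | nil => exact absurd rfl h
  | cons hadj q' =>
    rw [Walk.getVert_cons_succ, Walk.getVert_zero, Walk.support_cons]
    simp

lemma getVert_mem_support' {T : SimpleGraph V} {x v : V} (q : T.Walk x v) (i : ℕ) :
    q.getVert i ∈ q.support := by
  rcases le_or_gt i q.length with h | h
  · exact Walk.mem_support_iff_exists_getVert.mpr ⟨i, rfl, h⟩
  · rw [Walk.getVert_of_length_le q h.le]
    exact Walk.end_mem_support q

/-- If `x` is an internal vertex of the tree path from `u` to `v`, then the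
branches of `u` and `v` at `x` are distinct. -/
lemma branch_ne [DecidableEq V] {T : SimpleGraph V} (hT : T.IsTree) {x u v : V}
    (hxu : x ≠ u) (hxv : x ≠ v)
    (hx : x ∈ (treePath hT u v).support) :
    branch hT x u ≠ branch hT x v := by
  set p := treePath hT u v with hp
  have hpath : p.IsPath := treePath_isPath hT u v
  set q1 := p.takeUntil x hx with hq1
  set q2 := p.dropUntil x hx with hq2
  have hq1p : q1.IsPath := hpath.takeUntil hx
  have hq2p : q2.IsPath := hpath.dropUntil hx
  have e1 : q1.reverse = treePath hT x u := treePath_unique hT _ hq1p.reverse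
  have e2 : q2 = treePath hT x v := treePath_unique hT _ hq2p
  have hmem1 : branch hT x u ∈ q1.support := by
    rw [branch, ← e1]
    have := getVert_mem_support' q1.reverse 1
    rwa [Walk.support_reverse, List.mem_reverse] at this
  have hmem2 : branch hT x v ∈ q2.support.tail := by
    rw [branch, ← e2]
    exact getVert_one_mem_support_tail q2 hxv
  have hnodup : (q1.support ++ q2.support.tail).Nodup := by
    rw [← Walk.support_append, Walk.take_spec p hx]
    exact hpath.support_nodup
  have hdisj := (List.nodup_append'.mp hnodup).2.2
  intro hEq
  exact hdisj hmem1 (hEq ▸ hmem2)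

/-- The routing of `G` along the unique paths of a spanning tree `T ≤ G`. -/
noncomputable def treeRouting [Fintype V] [DecidableEq V] {G T : SimpleGraph V}
    (hle : T ≤ G) (hT : T.IsTree) : Forwarding.Routing G where
  walk x y := (treePath hT x y).mapLe hle
  isPath x y := (Walk.mapLe_isPath hle).mpr (treePath_isPath hT x y)

lemma treeRouting_support [Fintype V] [DecidableEq V] {G T : SimpleGraph V} (hle : T ≤ G)
    (hT : T.IsTree) (u v : V) :
    ((treeRouting hle hT).walk u v).support = (treePath hT u v).support := by
  have hid : ⇑(Hom.ofLE hle) = id := rfl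
  simp [treeRouting, Walk.mapLe, Walk.support_map, hid]

/-- Tangent-line estimate: for integers, `(2R+1)t - R(R+1) ≤ t²`. -/
private lemma tangent_ineq (t R : ℤ) : (2*R+1)*t - R*(R+1) ≤ t^2 := by
  rcases le_or_gt t R with h | h
  · nlinarith [mul_nonneg (sub_nonneg.mpr h) (by linarith : (0:ℤ) ≤ R + 1 - t)]
  · nlinarith [mul_nonneg (by linarith : (0:ℤ) ≤ t - R - 1) (by linarith : (0:ℤ) ≤ t - R)]

private lemma sum_sq_lower {ι : Type*} (B : Finset ι) (f : ι → ℕ) (R : ℤ) :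
    (2*R+1) * (∑ b ∈ B, (f b : ℤ)) - (B.card : ℤ) * (R*(R+1)) ≤ ∑ b ∈ B, (f b : ℤ)^2 := by
  calc (2*R+1) * (∑ b ∈ B, (f b : ℤ)) - (B.card : ℤ) * (R*(R+1))
      = ∑ b ∈ B, ((2*R+1) * (f b : ℤ) - R*(R+1)) := by
        rw [Finset.sum_sub_distrib, ← Finset.mul_sum, Finset.sum_const, nsmul_eq_mul]
    _ ≤ _ := Finset.sum_le_sum fun b _ => tangent_ineq _ R

/-- The key counting bound: the load of `x` under a tree routing, plus the sum
of the squares of the branch sizes, is at most `(n-1)²`. -/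
lemma load_bound [Fintype V] [DecidableEq V] {G T : SimpleGraph V} [DecidableRel G.Adj]
    (hle : T ≤ G) (hT : T.IsTree) (x : V) :
    Forwarding.vertexLoad (treeRouting hle hT) x
      + ∑ b ∈ G.neighborFinset x,
          (((univ : Finset V).erase x).filter (fun u => branch hT x u = b)).card ^ 2
      ≤ ((univ : Finset V).erase x).card ^ 2 := by
  classical
  set S := (univ : Finset V).erase x with hSdef
  set c : V → V := branch hT x with hcdef
  have h1 : Forwarding.vertexLoad (treeRouting hle hT) x
      ≤ ((S ×ˢ S).filter fun p : V × V => c p.1 ≠ c p.2).card := by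
    refine card_le_card ?_
    intro p hp
    simp only [mem_filter, mem_univ, true_and] at hp
    obtain ⟨hne, hx, hx1, hx2⟩ := hp
    rw [treeRouting_support] at hx
    refine mem_filter.mpr ⟨mem_product.mpr ⟨mem_erase.mpr ⟨hx1.symm, mem_univ _⟩,
      mem_erase.mpr ⟨hx2.symm, mem_univ _⟩⟩, branch_ne hT hx1 hx2 hx⟩
  have h2 : ∑ b ∈ G.neighborFinset x, (S.filter fun u => c u = b).card ^ 2
      ≤ ((S ×ˢ S).filter fun p : V × V => c p.1 = c p.2).card := by
    have hdisj : ∀ b₁ ∈ G.neighborFinset x, ∀ b₂ ∈ G.neighborFinset x, b₁ ≠ b₂ →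
        Disjoint ((S.filter fun u => c u = b₁) ×ˢ (S.filter fun u => c u = b₁))
          ((S.filter fun u => c u = b₂) ×ˢ (S.filter fun u => c u = b₂)) := by
      intro b₁ _ b₂ _ hb
      rw [Finset.disjoint_left]
      rintro ⟨u, v⟩ h₁ h₂
      rw [mem_product, mem_filter, mem_filter] at h₁ h₂
      exact hb (h₁.1.2.symm.trans h₂.1.2)
    calc ∑ b ∈ G.neighborFinset x, (S.filter fun u => c u = b).card ^ 2
        = ∑ b ∈ G.neighborFinset x,
            ((S.filter fun u => c u = b) ×ˢ (S.filter fun u => c u = b)).card := by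
          simp [Finset.card_product, sq]
      _ = ((G.neighborFinset x).biUnion fun b =>
            (S.filter fun u => c u = b) ×ˢ (S.filter fun u => c u = b)).card :=
          (Finset.card_biUnion hdisj).symm
      _ ≤ _ := by
          refine card_le_card ?_
          intro p hp
          rw [Finset.mem_biUnion] at hp
          obtain ⟨b, _, hb⟩ := hp
          rw [mem_product, mem_filter, mem_filter] at hb
          exact mem_filter.mpr ⟨mem_product.mpr ⟨hb.1.1, hb.2.1⟩, hb.1.2.trans hb.2.2.symm⟩
  have h3 : ((S ×ˢ S).filter fun p : V × V => c p.1 ≠ c p.2).card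
      + ((S ×ˢ S).filter fun p : V × V => c p.1 = c p.2).card = S.card ^ 2 := by
    rw [add_comm, Finset.card_filter_add_card_filter_not, Finset.card_product, sq]
  omega

end SpanningTree

/-- For every connected graph `G` on `n` vertices with
maximum degree `Δ ≥ 1`,
`ξ(G) ≤ (n-1)(n-2) - (2n - 2 - Δ⌊1 + (n-1)/Δ⌋)⌊(n-1)/Δ⌋`. -/
theorem xi_upper_bound_maxDegree {V : Type*} [Fintype V] [DecidableEq V]
    (G : SimpleGraph V) [DecidableRel G.Adj] (hG : G.Connected)
    (hΔ : 1 ≤ G.maxDegree) :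
    (Forwarding.xi G : ℤ) ≤
      ((Fintype.card V : ℤ) - 1) * ((Fintype.card V : ℤ) - 2) -
        (2 * (Fintype.card V : ℤ) - 2 - (G.maxDegree : ℤ) *
            ⌊1 + ((Fintype.card V : ℚ) - 1) / (G.maxDegree : ℚ)⌋) *
          ⌊((Fintype.card V : ℚ) - 1) / (G.maxDegree : ℚ)⌋ := by
  classical
  haveI : Nonempty V := hG.nonempty
  obtain ⟨T, hle, hT⟩ := exists_spanning_tree' _ G rfl hG
  set R0 : Forwarding.Routing G := treeRouting hle hT with hR0
  have hxi : Forwarding.xi G ≤ Forwarding.routingVertexIndex R0 :=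
    Nat.sInf_le ⟨R0, rfl⟩
  obtain ⟨x, -, hsup⟩ :=
    Finset.exists_mem_eq_sup (univ : Finset V) univ_nonempty (Forwarding.vertexLoad R0)
  set q : ℚ := ((Fintype.card V : ℚ) - 1) / (G.maxDegree : ℚ) with hq
  set Rz : ℤ := ⌊q⌋ with hRz
  have hfloor : ⌊1 + q⌋ = Rz + 1 := by rw [add_comm, Int.floor_add_one]
  rw [hfloor]
  set S := (univ : Finset V).erase x with hS
  have hScard : (S.card : ℤ) = (Fintype.card V : ℤ) - 1 := by
    rw [hS, card_erase_of_mem (mem_univ x), card_univ]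
    have h1 : 1 ≤ Fintype.card V := Fintype.card_pos
    push_cast [Nat.cast_sub h1]
    ring
  set f : V → ℕ := fun b => (S.filter (fun u => branch hT x u = b)).card with hf
  set B := G.neighborFinset x with hB
  have hfib : ∑ b ∈ B, f b = S.card := by
    refine (Finset.card_eq_sum_card_fiberwise ?_).symm
    intro u hu
    rw [hB, Finset.mem_coe, SimpleGraph.mem_neighborFinset]
    exact hle (branch_adj hT (Finset.mem_erase.mp hu).1.symm)
  have hloadb := load_bound hle hT x
  have hload : (Forwarding.vertexLoad R0 x : ℤ) + ∑ b ∈ B, (f b : ℤ)^2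
      ≤ ((Fintype.card V : ℤ) - 1)^2 := by
    rw [← hScard]
    exact_mod_cast hloadb
  have hsum := sum_sq_lower B f Rz
  have hfibz : ∑ b ∈ B, (f b : ℤ) = (Fintype.card V : ℤ) - 1 := by
    rw [← hScard, ← hfib]; push_cast; rfl
  have hBcard : (B.card : ℤ) ≤ (G.maxDegree : ℤ) := by
    exact_mod_cast G.degree_le_maxDegree x
  have hRz0 : (0:ℤ) ≤ Rz * (Rz + 1) := by
    rcases le_or_gt 0 Rz with h | h
    · exact mul_nonneg h (by linarith)
    · nlinarith
  have key : (Forwarding.vertexLoad R0 x : ℤ) ≤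
      ((Fintype.card V : ℤ) - 1) * ((Fintype.card V : ℤ) - 2) -
        (2 * (Fintype.card V : ℤ) - 2 - (G.maxDegree : ℤ) * (Rz + 1)) * Rz := by
    rw [hfibz] at hsum
    nlinarith [hsum, hload, mul_le_mul_of_nonneg_right hBcard hRz0]
  have hxiz : (Forwarding.xi G : ℤ) ≤ (Forwarding.vertexLoad R0 x : ℤ) := by
    have h : Forwarding.routingVertexIndex R0 = Forwarding.vertexLoad R0 x := hsup
    exact_mod_cast le_trans hxi (le_of_eq h)
  exact le_trans hxiz key
end

section
/- Let G be a connected simple graph on n vertices with ε edges, maximum degree Δ, and diameter d. Then (a) ξ(G) ≤ ξ_m(G) ≤ (n−1)(n−2) − 2(ε − Δ), and (b) ξ(G) ≤ ξ_m(G) ≤ n² − 3n − ⌊d/2⌋² − ⌈d/2⌉² + d + 2 (as inequalities of integers). -/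
open Finset

section AuxLemmas
variable {V : Type*} [Fintype V] [DecidableEq V] {G : SimpleGraph V}

lemma dist_getVert_le (hG : G.Connected) {x y : V} (W : G.Walk x y) :
    ∀ i j : ℕ, i ≤ j → G.dist (W.getVert i) (W.getVert j) ≤ j - i := by
  induction W with
  | nil => intro i j _; simp [SimpleGraph.Walk.getVert, SimpleGraph.dist_self]
  | @cons u u' y h W ih =>
    intro i j hij
    match i, j with
    | 0, 0 => simp
    | 0, (j+1) =>
      have h1 : G.dist u u' ≤ 1 := by
        simpa using SimpleGraph.dist_le (SimpleGraph.Walk.cons h SimpleGraph.Walk.nil)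
      have h2 : G.dist u' (W.getVert j) ≤ j := by
        simpa using ih 0 j (Nat.zero_le j)
      calc G.dist ((SimpleGraph.Walk.cons h W).getVert 0) ((SimpleGraph.Walk.cons h W).getVert (j+1))
          = G.dist u (W.getVert j) := by
            rw [SimpleGraph.Walk.getVert_zero, SimpleGraph.Walk.getVert_cons_succ]
        _ ≤ G.dist u u' + G.dist u' (W.getVert j) := hG.dist_triangle
        _ ≤ 1 + j := add_le_add h1 h2
        _ = (j+1) - 0 := by omega
    | (i+1), (j+1) =>
      simpa [SimpleGraph.Walk.getVert_cons_succ] using ih i j (by omega)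

lemma dist_getVert_eq (hG : G.Connected) {x y : V} (W : G.Walk x y)
    (hW : W.length = G.dist x y) {i j : ℕ} (hij : i ≤ j) (hj : j ≤ W.length) :
    G.dist (W.getVert i) (W.getVert j) = j - i := by
  refine le_antisymm (dist_getVert_le hG W i j hij) ?_
  have h1 : G.dist x (W.getVert i) ≤ i := by
    simpa using dist_getVert_le hG W 0 i (Nat.zero_le i)
  have h2 : G.dist (W.getVert j) y ≤ W.length - j := by
    have := dist_getVert_le hG W j W.length hj
    rwa [SimpleGraph.Walk.getVert_length] at this
  have h3 : G.dist x y ≤ G.dist x (W.getVert i) + G.dist (W.getVert i) y := hG.dist_triangle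
  have h4 : G.dist (W.getVert i) y ≤ G.dist (W.getVert i) (W.getVert j) + G.dist (W.getVert j) y :=
    hG.dist_triangle
  omega

lemma f_mono {k n : ℤ} (hk : 0 ≤ k) (hkn : k ≤ n) : k*(k-1) ≤ n*(n-1) := by
  rcases le_or_gt 1 (n+k) with h | h
  · nlinarith [mul_nonneg (by omega : (0:ℤ) ≤ n - k) (by omega : (0:ℤ) ≤ n + k - 1)]
  · have hn : n = 0 ∧ k = 0 := by omega
    simp [hn.1, hn.2]

lemma f_conv {m M b : ℤ} (hb : 0 ≤ b) (hbm : b ≤ m) (hmM : m ≤ M) :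
    m*(m-1) + M*(M-1) ≤ (m + M - b)*(m + M - b - 1) + b*(b-1) := by
  nlinarith [mul_nonneg (by omega : (0:ℤ) ≤ m - b) (by omega : (0:ℤ) ≤ M - b)]

lemma key_arith {p q t m M : ℤ} (ht : 0 ≤ t) (htp : t ≤ p) (htq : t ≤ q)
    (hm : 0 ≤ m) (hmM : m ≤ M) (hM : M ≤ m + 1) (h : m + M + 2*t ≤ p + q) :
    m*(m-1) + M*(M-1) ≤ p*(p-1) + q*(q-1) - t*(t-1) := by
  have ha : (0:ℤ) ≤ p - t := by omega
  have hb : (0:ℤ) ≤ q - t := by omega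
  have h1 : 0 ≤ 2*t*(p-t) := by positivity
  have h2 : 0 ≤ t*(2*q-t-1) := by
    rcases eq_or_lt_of_le ht with h' | h'
    · simp [← h']
    · exact mul_nonneg (by omega) (by omega)
  have key : m*(m-1) + M*(M-1) ≤ (p-t)*((p-t)-1) + (q-t)*((q-t)-1) := by
    rcases le_or_gt m (p-t) with hma | hma
    · rcases le_or_gt M (q-t) with hMb | hMb
      · have := f_mono hm hma
        have := f_mono (le_trans hm hmM) hMb
        linarith
      · have hbm : q - t ≤ m := by omega
        have hc := f_conv hb hbm hmM
        have hd := f_mono (by omega : (0:ℤ) ≤ m + M - (q-t)) (by omega : m + M - (q-t) ≤ p - t)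
        linarith
    · have hc := f_conv ha (by omega : p - t ≤ m) hmM
      have hd := f_mono (by omega : (0:ℤ) ≤ m + M - (p-t)) (by omega : m + M - (p-t) ≤ q - t)
      linarith
  have e1 : p*(p-1) - t*(t-1) - (p-t)*((p-t)-1) = 2*t*(p-t) := by ring
  have e2 : q*(q-1) - (q-t)*((q-t)-1) = t*(2*q-t-1) := by ring
  linarith


end AuxLemmas

namespace Forwarding

variable {V : Type*} [Fintype V] [DecidableEq V] {G : SimpleGraph V}

lemma mem_support_dist (hG : G.Connected) {R : Routing G} (hR : R.IsMinimal) {u v x : V}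
    (hx : x ∈ (R.walk u v).support) : G.dist u x + G.dist x v = G.dist u v := by
  have h1 : G.dist u x ≤ ((R.walk u v).takeUntil x hx).length := SimpleGraph.dist_le _
  have h2 : G.dist x v ≤ ((R.walk u v).dropUntil x hx).length := SimpleGraph.dist_le _
  have h3 : ((R.walk u v).takeUntil x hx).length + ((R.walk u v).dropUntil x hx).length
      = (R.walk u v).length := by
    rw [← SimpleGraph.Walk.length_append, (R.walk u v).take_spec hx]
  have h4 : G.dist u v ≤ G.dist u x + G.dist x v := hG.dist_triangle
  have h5 := hR u v
  omega

lemma geo_dist (hG : G.Connected) {x a : V} (W : G.Walk x a) (hW : W.length = G.dist x a)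
    {i : ℕ} (hi : i ≤ W.length) : G.dist x (W.getVert i) = i := by
  have := dist_getVert_eq hG W hW (Nat.zero_le i) hi
  simpa [SimpleGraph.Walk.getVert_zero] using this

lemma geo_mem (hG : G.Connected) {x a : V} (W : G.Walk x a) (hW : W.length = G.dist x a)
    {u : V} (hu : u ∈ (Finset.Icc 1 W.length).image W.getVert) :
    1 ≤ G.dist x u ∧ G.dist x u ≤ W.length ∧ W.getVert (G.dist x u) = u := by
  obtain ⟨i, hi, rfl⟩ := Finset.mem_image.mp hu
  rw [Finset.mem_Icc] at hi
  rw [geo_dist hG W hW hi.2]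
  exact ⟨hi.1, hi.2, rfl⟩

lemma geo_card (hG : G.Connected) {x a : V} (W : G.Walk x a) (hW : W.length = G.dist x a) :
    ((Finset.Icc 1 W.length).image W.getVert).card = W.length := by
  rw [Finset.card_image_of_injOn, Nat.card_Icc]
  · omega
  · intro i hi j hj hij
    rw [Finset.coe_Icc, Set.mem_Icc] at hi hj
    have h1 := geo_dist hG W hW hi.2
    have h2 := geo_dist hG W hW hj.2
    rw [← h1, ← h2, hij]

lemma geo_ne (hG : G.Connected) {x a : V} (W : G.Walk x a) (hW : W.length = G.dist x a)
    {u : V} (hu : u ∈ (Finset.Icc 1 W.length).image W.getVert) : u ≠ x := by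
  intro h
  have := (geo_mem hG W hW hu).1
  rw [h, SimpleGraph.dist_self] at this
  omega

lemma geo_pair (hG : G.Connected) {x a : V} (W : G.Walk x a) (hW : W.length = G.dist x a)
    {u v : V} (hu : u ∈ (Finset.Icc 1 W.length).image W.getVert)
    (hv : v ∈ (Finset.Icc 1 W.length).image W.getVert) (huv : u ≠ v) :
    G.dist u v < G.dist u x + G.dist x v := by
  obtain ⟨h1u, h2u, h3u⟩ := geo_mem hG W hW hu
  obtain ⟨h1v, h2v, h3v⟩ := geo_mem hG W hW hv
  set i := G.dist x u with hidef
  set j := G.dist x v with hjdef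
  have hij : i ≠ j := by
    intro h; rw [← h3u, h, h3v] at huv; exact huv rfl
  have hux : G.dist u x = i := by rw [SimpleGraph.dist_comm]
  rcases lt_or_gt_of_ne hij with h | h
  · have := dist_getVert_eq hG W hW (le_of_lt h) h2v
    rw [h3u, h3v] at this
    omega
  · have := dist_getVert_eq hG W hW (le_of_lt h) h2u
    rw [h3u, h3v] at this
    rw [SimpleGraph.dist_comm] at this
    omega

end Forwarding

/-- For a connected graph `G` on `n` vertices with `ε`
edges, maximum degree `Δ` and diameter `d`:
(a) `ξ(G) ≤ ξ_m(G) ≤ (n-1)(n-2) - 2(ε - Δ)`, and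
(b) `ξ(G) ≤ ξ_m(G) ≤ n² - 3n - ⌊d/2⌋² - ⌈d/2⌉² + d + 2`. -/
theorem xiMin_upper_bounds {V : Type*} [Fintype V] [DecidableEq V]
    (G : SimpleGraph V) [DecidableRel G.Adj] (hG : G.Connected) :
    Forwarding.xi G ≤ Forwarding.xiMin G ∧
    (Forwarding.xiMin G : ℤ) ≤
      ((Fintype.card V : ℤ) - 1) * ((Fintype.card V : ℤ) - 2) -
        2 * ((G.edgeFinset.card : ℤ) - (G.maxDegree : ℤ)) ∧
    (Forwarding.xiMin G : ℤ) ≤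
      (Fintype.card V : ℤ) ^ 2 - 3 * (Fintype.card V : ℤ) -
        ((G.diam / 2 : ℕ) : ℤ) ^ 2 - (((G.diam + 1) / 2 : ℕ) : ℤ) ^ 2 +
        (G.diam : ℤ) + 2 := by
  classical
  have hne : Nonempty V := hG.nonempty
  have hex : ∀ u v : V, ∃ p : G.Walk u v, p.length = G.dist u v :=
    hG.exists_walk_length_eq_dist
  let R0 : Forwarding.Routing G :=
    ⟨fun u v => (hex u v).choose, fun u v =>
      SimpleGraph.Walk.isPath_of_length_eq_dist _ (hex u v).choose_spec⟩
  have hR0 : R0.IsMinimal := fun u v => (hex u v).choose_spec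
  have hmem : Forwarding.xiMin G ∈
      {k | ∃ R : Forwarding.Routing G, R.IsMinimal ∧ Forwarding.routingVertexIndex R = k} :=
    Nat.sInf_mem ⟨Forwarding.routingVertexIndex R0, R0, hR0, rfl⟩
  obtain ⟨R, hRmin, hRidx⟩ := hmem
  have hxi : Forwarding.xi G ≤ Forwarding.xiMin G := Nat.sInf_le ⟨R, hRidx⟩
  obtain ⟨x0, -, hx0⟩ := Finset.exists_mem_eq_sup (univ : Finset V)
    Finset.univ_nonempty (Forwarding.vertexLoad R)
  set n := Fintype.card V with hn
  have hn1 : 1 ≤ n := Fintype.card_pos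
  have hsq : ∀ k : ℕ, k ≤ k * k := fun k => by
    cases k with
    | zero => simp
    | succ m => exact Nat.le_mul_of_pos_left _ (Nat.succ_pos m)
  set B := (univ.erase x0).offDiag with hB
  set P := univ.filter (fun p : V × V =>
      p.1 ≠ p.2 ∧ x0 ∈ (R.walk p.1 p.2).support ∧ x0 ≠ p.1 ∧ x0 ≠ p.2) with hP
  have hload : Forwarding.vertexLoad R x0 = P.card := rfl
  have hidx : (Forwarding.xiMin G : ℤ) = (P.card : ℤ) := by
    rw [← hRidx]
    have : Forwarding.routingVertexIndex R = Forwarding.vertexLoad R x0 := hx0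
    rw [this, hload]
  have hPB : P ⊆ B := by
    intro p hp
    simp only [hP, Finset.mem_filter, Finset.mem_univ, true_and] at hp
    simp only [hB, Finset.mem_offDiag, Finset.mem_erase, Finset.mem_univ, and_true]
    exact ⟨Ne.symm hp.2.2.1, Ne.symm hp.2.2.2, hp.1⟩
  have hBcard : B.card = (n-1) * (n-1) - (n-1) := by
    rw [hB, Finset.offDiag_card, Finset.card_erase_of_mem (Finset.mem_univ x0),
      Finset.card_univ]
  have hBZ : (B.card : ℤ) = ((n:ℤ) - 1) * ((n:ℤ) - 1) - ((n:ℤ) - 1) := by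
    rw [hBcard, Nat.cast_sub (hsq (n-1)), Nat.cast_mul, Nat.cast_sub hn1, Nat.cast_one]
  refine ⟨hxi, ?_, ?_⟩
  · -- part (a)
    set A := B.filter (fun p : V × V => G.Adj p.1 p.2) with hA
    have hdisj : Disjoint P A := by
      rw [Finset.disjoint_left]
      intro p hp hpA
      simp only [hP, Finset.mem_filter, Finset.mem_univ, true_and] at hp
      simp only [hA, Finset.mem_filter] at hpA
      have hd1 := Forwarding.mem_support_dist hG hRmin hp.2.1
      have hd2 : G.dist p.1 p.2 = 1 := SimpleGraph.dist_eq_one_iff_adj.mpr hpA.2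
      have hd3 : G.dist p.1 x0 ≠ 0 := by
        rw [ne_eq, hG.dist_eq_zero_iff]
        exact fun h => hp.2.2.1 h.symm
      have hd4 : G.dist x0 p.2 ≠ 0 := by
        rw [ne_eq, hG.dist_eq_zero_iff]
        exact hp.2.2.2
      omega
    have hPA : P.card + A.card ≤ B.card := by
      rw [← Finset.card_union_of_disjoint hdisj]
      exact Finset.card_le_card (Finset.union_subset hPB (Finset.filter_subset _ _))
    have hAdj : 2 * G.edgeFinset.card ≤ A.card + 2 * G.degree x0 := by
      rw [SimpleGraph.two_mul_card_edgeFinset]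
      have hsub : (univ.filter fun (p : V × V) => G.Adj p.1 p.2) ⊆
          A ∪ ({x0} ×ˢ G.neighborFinset x0 ∪ G.neighborFinset x0 ×ˢ {x0}) := by
        intro p hp
        simp only [Finset.mem_filter, Finset.mem_univ, true_and] at hp
        by_cases h1 : p.1 = x0
        · apply Finset.mem_union_right
          apply Finset.mem_union_left
          rw [Finset.mem_product, Finset.mem_singleton, SimpleGraph.mem_neighborFinset]
          exact ⟨h1, h1 ▸ hp⟩
        · by_cases h2 : p.2 = x0
          · apply Finset.mem_union_right
            apply Finset.mem_union_right
            rw [Finset.mem_product, Finset.mem_singleton, SimpleGraph.mem_neighborFinset]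
            exact ⟨(h2 ▸ hp).symm, h2⟩
          · apply Finset.mem_union_left
            rw [hA, Finset.mem_filter]
            refine ⟨?_, hp⟩
            rw [hB, Finset.mem_offDiag]
            exact ⟨Finset.mem_erase.mpr ⟨h1, Finset.mem_univ _⟩,
              Finset.mem_erase.mpr ⟨h2, Finset.mem_univ _⟩, hp.ne⟩
      have hle1 : #(univ.filter fun (p : V × V) => G.Adj p.1 p.2) ≤
          #(A ∪ ({x0} ×ˢ G.neighborFinset x0 ∪ G.neighborFinset x0 ×ˢ {x0})) := by
        -- the filter in the goal after `rw` uses pattern-matching; show via subset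
        refine Finset.card_le_card ?_
        intro p hp
        refine hsub ?_
        simpa using hp
      refine le_trans hle1 ?_
      refine le_trans (Finset.card_union_le _ _) ?_
      have hle2 : #({x0} ×ˢ G.neighborFinset x0 ∪ G.neighborFinset x0 ×ˢ {x0}) ≤
          2 * G.degree x0 := by
        refine le_trans (Finset.card_union_le _ _) ?_
        rw [Finset.card_product, Finset.card_product, Finset.card_singleton,
          SimpleGraph.card_neighborFinset_eq_degree]
        omega
      omega
    have hdeg : G.degree x0 ≤ G.maxDegree := G.degree_le_maxDegree x0
    have hPA' : (P.card : ℤ) + (A.card : ℤ) ≤ (B.card : ℤ) := by exact_mod_cast hPA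
    have hAdj' : 2 * (G.edgeFinset.card : ℤ) ≤ (A.card : ℤ) + 2 * (G.degree x0 : ℤ) := by
      exact_mod_cast hAdj
    have hdeg' : (G.degree x0 : ℤ) ≤ (G.maxDegree : ℤ) := by exact_mod_cast hdeg
    have hring : ((n:ℤ) - 1) * ((n:ℤ) - 1) - ((n:ℤ) - 1) = ((n:ℤ) - 1) * ((n:ℤ) - 2) := by
      ring
    rw [hidx]
    linarith
  · -- part (b)
    obtain ⟨a, b, hab⟩ := SimpleGraph.exists_dist_eq_diam (G := G)
    obtain ⟨Wa, hWa⟩ := hex x0 a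
    obtain ⟨Wb, hWb⟩ := hex x0 b
    set pa := Wa.length with hpa
    set qb := Wb.length with hqb
    set Y := (Finset.Icc 1 pa).image Wa.getVert with hY
    set Z := (Finset.Icc 1 qb).image Wb.getVert with hZ
    set S := Y.offDiag ∪ Z.offDiag with hS
    set t := (Y ∩ Z).card with htdef
    have hpq : G.diam ≤ pa + qb := by
      have h1 : G.dist a b ≤ G.dist a x0 + G.dist x0 b := hG.dist_triangle
      rw [hab, SimpleGraph.dist_comm (u := a) (v := x0)] at h1
      omega
    have hYB : ∀ u ∈ Y, u ∈ univ.erase x0 := fun u hu =>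
      Finset.mem_erase.mpr ⟨Forwarding.geo_ne hG Wa hWa hu, Finset.mem_univ u⟩
    have hZB : ∀ u ∈ Z, u ∈ univ.erase x0 := fun u hu =>
      Finset.mem_erase.mpr ⟨Forwarding.geo_ne hG Wb hWb hu, Finset.mem_univ u⟩
    have hSB : S ⊆ B := by
      intro p hp
      rw [hS, Finset.mem_union] at hp
      rw [hB, Finset.mem_offDiag]
      rcases hp with hp | hp <;> rw [Finset.mem_offDiag] at hp
      · exact ⟨hYB _ hp.1, hYB _ hp.2.1, hp.2.2⟩
      · exact ⟨hZB _ hp.1, hZB _ hp.2.1, hp.2.2⟩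
    have hdisj : Disjoint P S := by
      rw [Finset.disjoint_left]
      intro p hp hpS
      simp only [hP, Finset.mem_filter, Finset.mem_univ, true_and] at hp
      have heq := Forwarding.mem_support_dist hG hRmin hp.2.1
      rw [hS, Finset.mem_union] at hpS
      rcases hpS with h | h <;> rw [Finset.mem_offDiag] at h
      · have := Forwarding.geo_pair hG Wa hWa h.1 h.2.1 h.2.2
        omega
      · have := Forwarding.geo_pair hG Wb hWb h.1 h.2.1 h.2.2
        omega
    have hPS : P.card + S.card ≤ B.card := by
      rw [← Finset.card_union_of_disjoint hdisj]
      exact Finset.card_le_card (Finset.union_subset hPB hSB)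
    have htb : G.diam + 2*t ≤ pa + qb := by
      have hmap : ∀ w ∈ Y ∩ Z, G.dist x0 w ∈ Finset.Icc 1 ((pa + qb - G.diam)/2) := by
        intro w hw
        rw [Finset.mem_inter] at hw
        obtain ⟨h1, h2, h3⟩ := Forwarding.geo_mem hG Wa hWa hw.1
        obtain ⟨h1', h2', h3'⟩ := Forwarding.geo_mem hG Wb hWb hw.2
        have hwa : G.dist w a = pa - G.dist x0 w := by
          have h5 := dist_getVert_eq hG Wa hWa h2 (le_refl Wa.length)
          rwa [h3, SimpleGraph.Walk.getVert_length] at h5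
        have hwb : G.dist w b = qb - G.dist x0 w := by
          have h5 := dist_getVert_eq hG Wb hWb h2' (le_refl Wb.length)
          rwa [h3', SimpleGraph.Walk.getVert_length] at h5
        have htri : G.dist a b ≤ G.dist a w + G.dist w b := hG.dist_triangle
        rw [hab, SimpleGraph.dist_comm (u := a) (v := w)] at htri
        rw [Finset.mem_Icc]
        omega
      have hinj : Set.InjOn (G.dist x0) ((Y ∩ Z : Finset V) : Set V) := by
        intro w hw w' hw' hww
        rw [Finset.coe_inter, Set.mem_inter_iff] at hw hw'
        obtain ⟨-, -, h3⟩ := Forwarding.geo_mem hG Wa hWa hw.1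
        obtain ⟨-, -, h3'⟩ := Forwarding.geo_mem hG Wa hWa hw'.1
        rw [← h3, ← h3', hww]
      have hcle := Finset.card_le_card_of_injOn (G.dist x0) hmap hinj
      rw [Nat.card_Icc] at hcle
      omega
    have htY : t ≤ pa := by
      calc t ≤ Y.card := Finset.card_le_card Finset.inter_subset_left
        _ = pa := Forwarding.geo_card hG Wa hWa
    have htZ : t ≤ qb := by
      calc t ≤ Z.card := Finset.card_le_card Finset.inter_subset_right
        _ = qb := Forwarding.geo_card hG Wb hWb
    have hScard : S.card + ((Y ∩ Z).card * (Y ∩ Z).card - (Y ∩ Z).card)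
        = (pa*pa - pa) + (qb*qb - qb) := by
      have h1 := Finset.card_union_add_card_inter Y.offDiag Z.offDiag
      have h2 : Y.offDiag ∩ Z.offDiag = (Y ∩ Z).offDiag := by
        ext p
        simp only [Finset.mem_inter, Finset.mem_offDiag]
        tauto
      rw [h2, Finset.offDiag_card, Finset.offDiag_card, Finset.offDiag_card,
        Forwarding.geo_card hG Wa hWa, Forwarding.geo_card hG Wb hWb] at h1
      exact h1
    have hSZ : (S.card : ℤ) = (pa:ℤ)*((pa:ℤ)-1) + (qb:ℤ)*((qb:ℤ)-1) - (t:ℤ)*((t:ℤ)-1) := by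
      have e := hScard
      zify [hsq t, hsq pa, hsq qb] at e
      rw [← htdef] at e
      rw [Nat.cast_sub (hsq t), Nat.cast_mul] at e
      linarith
    have hmM : G.diam/2 + (G.diam+1)/2 = G.diam ∧ G.diam/2 ≤ (G.diam+1)/2 ∧
        (G.diam+1)/2 ≤ G.diam/2 + 1 := by omega
    have hkey := key_arith (p := (pa:ℤ)) (q := (qb:ℤ)) (t := (t:ℤ))
      (m := ((G.diam/2 : ℕ) : ℤ)) (M := (((G.diam+1)/2 : ℕ) : ℤ))
      (by positivity) (by exact_mod_cast htY) (by exact_mod_cast htZ) (by positivity)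
      (by exact_mod_cast hmM.2.1) (by exact_mod_cast hmM.2.2)
      (by exact_mod_cast (by omega : G.diam/2 + (G.diam+1)/2 + 2*t ≤ pa + qb))
    have hPS' : (P.card : ℤ) + (S.card : ℤ) ≤ (B.card : ℤ) := by exact_mod_cast hPS
    have hmMZ : ((G.diam/2 : ℕ) : ℤ) + (((G.diam+1)/2 : ℕ) : ℤ) = (G.diam : ℤ) := by
      exact_mod_cast hmM.1
    have hexp : ((G.diam/2 : ℕ) : ℤ)*(((G.diam/2 : ℕ) : ℤ)-1)
        + (((G.diam+1)/2 : ℕ) : ℤ)*((((G.diam+1)/2 : ℕ) : ℤ)-1)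
        = ((G.diam/2 : ℕ) : ℤ)^2 + (((G.diam+1)/2 : ℕ) : ℤ)^2
          - (((G.diam/2 : ℕ) : ℤ) + (((G.diam+1)/2 : ℕ) : ℤ)) := by ring
    have hB2 : (B.card : ℤ) = (n:ℤ)^2 - 3*(n:ℤ) + 2 := by rw [hBZ]; ring
    rw [hidx]
    linarith
end
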